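/- arXiv:1010.6139 — 8 statements merged into one kernel-verified Lean document; each statement's English description precedes it below -/
import Mathlib

section
/- Let G be a connected graph with girth 3, let C1 be a shortest cycle of G (a triangle), and let C2 be a shortest cycle among all cycles of G other than C1. If C1 and C2 share at least two vertices, then C1 and C2 share a common edge. -/
open SimpleGraph

/-- Any two distinct vertices on a closed walk of length 3 are joined by an edge
of that walk. -/
lemma triangle_edge {V : Type*} {G : SimpleGraph V} {a x y : V} (C : G.Walk a a)
    (hlen : C.length = 3) (hx : x ∈ C.support) (hy : y ∈ C.support) (hxy : x ≠ y) :
    s(x, y) ∈ C.edges := by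
  cases C with
  | nil => simp at hlen
  | cons h1 p =>
    cases p with
    | nil => simp at hlen
    | cons h2 q =>
      cases q with
      | nil => simp at hlen
      | cons h3 r =>
        cases r with
        | nil =>
          simp only [Walk.support_cons, Walk.support_nil, List.mem_cons,
            List.mem_singleton, List.not_mem_nil, or_false] at hx hy
          simp only [Walk.edges_cons, Walk.edges_nil, List.mem_cons, List.not_mem_nil, or_false]
          rcases hx with rfl | rfl | rfl | rfl <;> rcases hy with rfl | rfl | rfl | rfl <;>
            simp_all [Sym2.eq_swap]
        | cons h4 s => simp [Walk.length_cons] at hlen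

lemma length_rotate' {V : Type*} [DecidableEq V] {G : SimpleGraph V} {u v : V}
    (c : G.Walk v v) (h : u ∈ c.support) : (c.rotate u h).length = c.length := by
  have := congr_arg Walk.length (c.take_spec h)
  simp only [Walk.length_append] at this
  simp only [Walk.rotate, Walk.length_append]
  omega

/-- Girth 3: if the second-shortest cycle shares two vertices with a shortest cycle
(a triangle), they share a common edge. -/
theorem stmt_1 {V : Type*} [DecidableEq V] (G : SimpleGraph V) (hG : G.Connected)
    (hgirth : G.girth = 3) {a b : V} (C1 : G.Walk a a) (C2 : G.Walk b b)
    (hC1 : C1.IsCycle) (hC1len : C1.length = 3) (hC2 : C2.IsCycle)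
    (hne : C2.edges.toFinset ≠ C1.edges.toFinset)
    (hmin : ∀ ⦃w : V⦄ (D : G.Walk w w), D.IsCycle →
      D.edges.toFinset ≠ C1.edges.toFinset → C2.length ≤ D.length)
    (hshare : ∃ x y : V, x ≠ y ∧ x ∈ C1.support ∧ x ∈ C2.support ∧
      y ∈ C1.support ∧ y ∈ C2.support) :
    ∃ e, e ∈ C1.edges ∧ e ∈ C2.edges := by
  by_contra hno
  push_neg at hno
  obtain ⟨x, y, hxy, hx1, hx2, hy1, hy2⟩ := hshare
  -- the triangle edge
  have hexy : s(x, y) ∈ C1.edges := triangle_edge C1 hC1len hx1 hy1 hxy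
  have hadj : G.Adj x y := C1.adj_of_mem_edges hexy
  -- rotate C2 to start at x
  set C := C2.rotate x hx2 with hCdef
  have hCcyc : C.IsCycle := hC2.rotate hx2
  have hCedges : ∀ e, e ∈ C.edges ↔ e ∈ C2.edges := fun e =>
    (C2.rotate_edges x hx2).perm.mem_iff
  -- b is in the tail of C2's support
  have hbtail : b ∈ C2.support.tail := by
    cases C2 with
    | nil => exact absurd rfl hC2.ne_nil
    | cons h p => simpa using p.end_mem_support
  have hy2' : y ∈ C.support := by
    rcases C2.mem_support_iff.mp hy2 with rfl | htail
    · exact C.mem_support_iff.mpr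
        (Or.inr ((C2.support_rotate x hx2).perm.mem_iff.mpr hbtail))
    · exact C.mem_support_iff.mpr
        (Or.inr ((C2.support_rotate x hx2).perm.mem_iff.mpr htail))
  -- split C at y
  set P := C.takeUntil y hy2' with hPdef
  set Q := C.dropUntil y hy2' with hQdef
  have hspec : P.append Q = C := C.take_spec hy2'
  have htail : C.support.tail = P.support.tail ++ Q.support.tail := by
    rw [← hspec, Walk.tail_support_append]
  have hnodup : (P.support.tail ++ Q.support.tail).Nodup := by
    rw [← htail]; exact hCcyc.2
  have hPlen : P.length ≥ 1 := by
    rcases Nat.eq_zero_or_pos P.length with h0 | h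
    · exact absurd (Walk.eq_of_length_eq_zero h0) hxy
    · exact h
  have hQlen : Q.length ≥ 1 := by
    rcases Nat.eq_zero_or_pos Q.length with h0 | h
    · exact absurd (Walk.eq_of_length_eq_zero h0).symm hxy
    · exact h
  have hyP : y ∈ P.support.tail := Walk.end_mem_tail_support_of_ne hxy P
  have hxQ : x ∈ Q.support.tail := Walk.end_mem_tail_support_of_ne hxy.symm Q
  -- P and Q are paths
  have hPpath : P.IsPath := by
    rw [Walk.isPath_def, P.support_eq_cons, List.nodup_cons]
    refine ⟨fun hxP => ?_, (List.Nodup.of_append_left hnodup)⟩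
    exact (List.disjoint_of_nodup_append hnodup) hxP hxQ
  have hQpath : Q.IsPath := by
    rw [Walk.isPath_def, Q.support_eq_cons, List.nodup_cons]
    refine ⟨fun hyQ => ?_, (List.Nodup.of_append_right hnodup)⟩
    exact (List.disjoint_of_nodup_append hnodup) hyP hyQ
  -- edges of P and Q are in C2
  have hPsub : ∀ e ∈ P.edges, e ∈ C2.edges := fun e he =>
    (hCedges e).mp (C.edges_takeUntil_subset hy2' he)
  have hQsub : ∀ e ∈ Q.edges, e ∈ C2.edges := fun e he =>
    (hCedges e).mp (C.edges_dropUntil_subset hy2' he)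
  -- the two new cycles
  have hD1 : (Walk.cons hadj.symm P).IsCycle := by
    rw [Walk.cons_isCycle_iff]
    exact ⟨hPpath, fun h => hno _ (by rw [Sym2.eq_swap]; exact hexy) (hPsub _ h)⟩
  have hD2 : (Walk.cons hadj Q).IsCycle := by
    rw [Walk.cons_isCycle_iff]
    exact ⟨hQpath, fun h => hno _ hexy (hQsub _ h)⟩
  -- their edge-sets differ from C1's
  have hD1ne : (Walk.cons hadj.symm P).edges.toFinset ≠ C1.edges.toFinset := by
    intro heq
    obtain ⟨e, he⟩ : ∃ e, e ∈ P.edges := by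
      cases hP : P.edges with
      | nil => rw [← Walk.length_edges, hP] at hPlen; simp at hPlen
      | cons e l => exact ⟨e, hP ▸ List.mem_cons_self (a := e) (l := l)⟩
    have : e ∈ C1.edges := by
      have : e ∈ (Walk.cons hadj.symm P).edges.toFinset := by
        simp [Walk.edges_cons, he]
      rw [heq] at this; simpa using this
    exact hno e this (hPsub e he)
  have hD2ne : (Walk.cons hadj Q).edges.toFinset ≠ C1.edges.toFinset := by
    intro heq
    obtain ⟨e, he⟩ : ∃ e, e ∈ Q.edges := by
      cases hQ : Q.edges with
      | nil => rw [← Walk.length_edges, hQ] at hQlen; simp at hQlen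
      | cons e l => exact ⟨e, hQ ▸ List.mem_cons_self (a := e) (l := l)⟩
    have : e ∈ C1.edges := by
      have : e ∈ (Walk.cons hadj Q).edges.toFinset := by
        simp [Walk.edges_cons, he]
      rw [heq] at this; simpa using this
    exact hno e this (hQsub e he)
  -- minimality gives a contradiction
  have h1 := hmin _ hD1 hD1ne
  have h2 := hmin _ hD2 hD2ne
  have hsum : P.length + Q.length = C2.length := by
    have := congr_arg Walk.length hspec
    rw [Walk.length_append] at this
    rw [this, hCdef, length_rotate' C2 hx2]
  have h3 := hC2.three_le_length
  simp only [Walk.length_cons] at h1 h2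
  omega
end

section
/- Let G be a connected graph with girth 5, let C1 be a shortest cycle of G, and let C2 be a shortest cycle among all cycles of G other than C1. If C1 and C2 share at least two vertices, then the edge intersection E(C1) ∩ E(C2) consists of exactly one edge or exactly two adjacent edges. -/
open SimpleGraph

set_option linter.unusedSectionVars false
set_option maxHeartbeats 1000000

section Helpers
variable {V : Type*} [DecidableEq V] {G : SimpleGraph V}


/-- In a path, any edge containing the final endpoint equals any other such edge. -/
lemma my_end_edge_unique {x y : V} {q : G.Walk x y} (hq : q.IsPath) :
    ∀ {e f : Sym2 V}, e ∈ q.edges → f ∈ q.edges → y ∈ e → y ∈ f → e = f := by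
  induction q with
  | nil => intro e f he; simp at he
  | @cons x w y h r ih =>
    intro e f he hf hye hyf
    have hpath := hq
    rw [Walk.cons_isPath_iff] at hpath
    obtain ⟨hr, hx⟩ := hpath
    have key : ∀ {g : Sym2 V}, g ∈ (Walk.cons h r).edges → y ∈ g → g ∉ r.edges →
        g = s(x, w) ∧ y = w := by
      intro g hg hyg hgr
      rw [Walk.edges_cons, List.mem_cons] at hg
      rcases hg with rfl | hg
      · rcases Sym2.mem_iff.mp hyg with rfl | rfl
        · exact absurd r.end_mem_support hx
        · exact ⟨rfl, rfl⟩
      · exact absurd hg hgr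
    by_cases her : e ∈ r.edges <;> by_cases hfr : f ∈ r.edges
    · exact ih hr her hfr hye hyf
    · obtain ⟨rfl, rfl⟩ := key hf hyf hfr
      -- r : Walk w w is a path, hence nil, so e ∈ r.edges is impossible
      have : r.edges = [] := by
        cases r with
        | nil => rfl
        | cons h' r' =>
          exfalso
          have := hr.support_nodup
          rw [Walk.support_cons] at this
          exact (List.nodup_cons.mp this).1 r'.end_mem_support
      rw [this] at her; simp at her
    · obtain ⟨rfl, rfl⟩ := key he hye her
      have : r.edges = [] := by
        cases r with
        | nil => rfl
        | cons h' r' =>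
          exfalso
          have := hr.support_nodup
          rw [Walk.support_cons] at this
          exact (List.nodup_cons.mp this).1 r'.end_mem_support
      rw [this] at hfr; simp at hfr
    · obtain ⟨rfl, rfl⟩ := key he hye her
      obtain ⟨rfl, -⟩ := key hf hyf hfr
      rfl

/-- A nonempty walk has an edge containing its final endpoint. -/
lemma my_exists_end_edge {x y : V} (q : G.Walk x y) (hq : q.length ≠ 0) :
    ∃ z, G.Adj z y ∧ s(z, y) ∈ q.edges := by
  have hrev : q.reverse.length ≠ 0 := by rwa [Walk.length_reverse]
  cases hre : q.reverse with
  | nil => rw [hre] at hrev; simp at hrev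
  | @cons _ z _ h r =>
    refine ⟨z, h.symm, ?_⟩
    have : s(y, z) ∈ q.reverse.edges := by rw [hre, Walk.edges_cons]; exact List.mem_cons_self
    rw [Walk.edges_reverse, List.mem_reverse] at this
    rwa [Sym2.eq_swap]


lemma my_end_mem_tail {u : V} (C : G.Walk u u) (hC : C.length ≠ 0) :
    u ∈ C.support.tail := by
  cases C with
  | nil => simp at hC
  | cons h q => rw [Walk.support_cons]; exact q.end_mem_support

lemma my_end_mem_tail_of_ne {u v : V} (w : G.Walk u v) (huv : u ≠ v) :
    v ∈ w.support.tail := by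
  cases w with
  | nil => exact absurd rfl huv
  | cons h q => rw [Walk.support_cons]; exact q.end_mem_support

/-- Split a cycle at two distinct support vertices into two arc paths. -/
lemma my_vert_split {b x y : V} {C : G.Walk b b} (hC : C.IsCycle) (hx : x ∈ C.support)
    (hy : y ∈ C.support) (hxy : x ≠ y) :
    ∃ (P1 : G.Walk x y) (P2 : G.Walk y x), P1.IsPath ∧ P2.IsPath ∧
      P1.length + P2.length = C.length ∧
      (∀ e ∈ P1.edges, e ∈ C.edges) ∧ (∀ e ∈ P2.edges, e ∈ C.edges) := by
  have hC' : (C.rotate x hx).IsCycle := hC.rotate hx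
  have hedges : ((C.rotate x hx).edges).Perm C.edges := (C.rotate_edges x hx).perm
  have hlen : (C.rotate x hx).length = C.length := by
    rw [← Walk.length_edges, ← Walk.length_edges]; exact hedges.length_eq
  have hClen : C.length ≠ 0 := by
    have := hC.three_le_length; omega
  have hytail : y ∈ C.support.tail := by
    rcases (by rwa [C.support_eq_cons, List.mem_cons] at hy : y = b ∨ y ∈ C.support.tail) with rfl | h
    · exact my_end_mem_tail C hClen
    · exact h
  have hy' : y ∈ (C.rotate x hx).support := by
    have : y ∈ (C.rotate x hx).support.tail := (C.support_rotate x hx).mem_iff.mpr hytail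
    exact List.mem_of_mem_tail this
  -- decompose the rotated cycle
  rcases hr : C.rotate x hx with _ | ⟨hadj, q⟩
  · rw [hr] at hC'; exact absurd hC' Walk.IsCycle.not_of_nil
  · rename_i z
    rw [hr] at hC' hedges hlen hy'
    rw [Walk.cons_isCycle_iff] at hC'
    obtain ⟨hqpath, hnotedge⟩ := hC'
    have hyq : y ∈ q.support := by
      rcases (by rwa [Walk.support_cons, List.mem_cons] at hy' : y = x ∨ y ∈ q.support) with rfl | h
      · exact absurd rfl hxy
      · exact h
    refine ⟨Walk.cons hadj (q.takeUntil y hyq), q.dropUntil y hyq, ?_, hqpath.dropUntil hyq, ?_, ?_, ?_⟩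
    · rw [Walk.cons_isPath_iff]
      refine ⟨hqpath.takeUntil hyq, fun hxmem => ?_⟩
      -- x is the endpoint of q; it cannot lie in the takeUntil part
      have hspec := q.take_spec hyq
      have hnodup := hqpath.support_nodup
      rw [← hspec, Walk.support_append, List.nodup_append'] at hnodup
      have hxdrop : x ∈ (q.dropUntil y hyq).support.tail :=
        my_end_mem_tail_of_ne _ hxy.symm
      exact hnodup.2.2 hxmem hxdrop
    · rw [Walk.length_cons, ← hlen, Walk.length_cons]
      have := congrArg Walk.length (q.take_spec hyq)
      rw [Walk.length_append] at this
      omega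
    · intro e he
      rw [Walk.edges_cons, List.mem_cons] at he
      refine hedges.mem_iff.mp ?_
      rw [Walk.edges_cons, List.mem_cons]
      rcases he with rfl | he
      · exact Or.inl rfl
      · exact Or.inr (q.edges_takeUntil_subset hyq he)
    · intro e he
      refine hedges.mem_iff.mp ?_
      rw [Walk.edges_cons, List.mem_cons]
      exact Or.inr (q.edges_dropUntil_subset hyq he)


/-- Two distinct paths with the same endpoints yield a cycle within their union of edges. -/
lemma my_two_paths_cycle {x y : V} (P1 P2 : G.Walk x y) (h1 : P1.IsPath) (h2 : P2.IsPath)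
    (hne : P1.edges ≠ P2.edges) :
    ∃ (w : V) (C : G.Walk w w), C.IsCycle ∧ ∀ e ∈ C.edges, e ∈ P1.edges ∨ e ∈ P2.edges := by
  set s : Set (Sym2 V) := {e | e ∈ P1.edges ∨ e ∈ P2.edges} with hs
  have hsub : ∀ e ∈ s, e ∈ G.edgeSet := by
    rintro e (he | he)
    · exact P1.edges_subset_edgeSet he
    · exact P2.edges_subset_edgeSet he
  have hH : ∀ e ∈ s, e ∈ (fromEdgeSet s).edgeSet := by
    intro e he
    rw [edgeSet_fromEdgeSet]
    exact ⟨he, G.not_isDiag_of_mem_edgeSet (hsub e he)⟩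
  have hP1H : ∀ e ∈ P1.edges, e ∈ (fromEdgeSet s).edgeSet := fun e he => hH e (Or.inl he)
  have hP2H : ∀ e ∈ P2.edges, e ∈ (fromEdgeSet s).edgeSet := fun e he => hH e (Or.inr he)
  by_cases hac : (fromEdgeSet s).IsAcyclic
  · exfalso
    have heq := hac.path_unique ⟨P1.transfer _ hP1H, h1.transfer hP1H⟩
      ⟨P2.transfer _ hP2H, h2.transfer hP2H⟩
    apply hne
    have : (P1.transfer _ hP1H).edges = (P2.transfer _ hP2H).edges := by
      exact congrArg (fun p : (fromEdgeSet s).Path x y => p.1.edges) heq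
    rwa [Walk.edges_transfer, Walk.edges_transfer] at this
  · simp only [IsAcyclic, not_forall, not_not] at hac
    obtain ⟨w, c, hc⟩ := hac
    have hcsub : ∀ e ∈ c.edges, e ∈ G.edgeSet := by
      intro e he
      have := c.edges_subset_edgeSet he
      rw [edgeSet_fromEdgeSet] at this
      exact hsub e this.1
    refine ⟨w, c.transfer G hcsub, hc.transfer hcsub, ?_⟩
    intro e he
    rw [Walk.edges_transfer] at he
    have := c.edges_subset_edgeSet he
    rw [edgeSet_fromEdgeSet] at this
    exact this.1
/-- A nonempty finite edge set with all vertex-degrees even contains a cycle. -/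
lemma my_even_cycle (D : Finset (Sym2 V)) (hsub : ∀ e ∈ D, e ∈ G.edgeSet)
    (heven : ∀ v : V, Even ((D.filter (fun e => v ∈ e)).card))
    (hne : D.Nonempty) :
    ∃ (w : V) (C : G.Walk w w), C.IsCycle ∧ ∀ e ∈ C.edges, e ∈ D := by
  by_contra hno
  push_neg at hno
  have key : ∀ n : ℕ, ∃ (x y : V) (P : G.Walk x y), P.IsPath ∧ (∀ e ∈ P.edges, e ∈ D) ∧
      P.length = n + 1 := by
    intro n
    induction n with
    | zero =>
      obtain ⟨e0, he0⟩ := hne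
      obtain ⟨u, v, rfl⟩ : ∃ u v, e0 = s(u, v) :=
        Sym2.inductionOn e0 (fun u v => ⟨u, v, rfl⟩)
      have hadj : G.Adj u v := (mem_edgeSet G).mp (hsub _ he0)
      refine ⟨u, v, Walk.cons hadj Walk.nil, ?_, ?_, by simp⟩
      · rw [Walk.cons_isPath_iff]
        exact ⟨Walk.IsPath.nil, by simp [hadj.ne]⟩
      · intro e he
        simp only [Walk.edges_cons, Walk.edges_nil, List.mem_singleton] at he
        rwa [he]
    | succ n ih =>
      obtain ⟨x, y, P, hP, hPD, hlen⟩ := ih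
      obtain ⟨z0, hadj0, hf⟩ := my_exists_end_edge P (by omega)
      have hfD : s(z0, y) ∈ D := hPD _ hf
      have hcard : 1 < (D.filter (fun e => y ∈ e)).card := by
        have h1 : s(z0, y) ∈ D.filter (fun e => y ∈ e) :=
          Finset.mem_filter.mpr ⟨hfD, by simp⟩
        have h2 := heven y
        rcases h2 with ⟨k, hk⟩
        have : 0 < (D.filter (fun e => y ∈ e)).card := Finset.card_pos.mpr ⟨_, h1⟩
        omega
      obtain ⟨g, hgmem, hgf⟩ := Finset.exists_mem_ne hcard s(z0, y)
      obtain ⟨hgD, hyg⟩ := Finset.mem_filter.mp hgmem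
      obtain ⟨z, rfl⟩ := Sym2.mem_iff_exists.mp hyg
      have hadj : G.Adj y z := (mem_edgeSet G).mp (hsub _ hgD)
      have hgP : s(y, z) ∉ P.edges := by
        intro hmem
        exact hgf (my_end_edge_unique hP hmem hf (by simp) (by simp))
      by_cases hz : z ∈ P.support
      · exfalso
        have hQpath := hP.dropUntil hz
        have hQe : ∀ e ∈ (P.dropUntil z hz).edges, e ∈ P.edges := P.edges_dropUntil_subset hz
        obtain ⟨e, he, heD⟩ := hno y (Walk.cons hadj (P.dropUntil z hz))
          (by rw [Walk.cons_isCycle_iff]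
              exact ⟨hQpath, fun hmem => hgP (hQe _ hmem)⟩)
        apply heD
        rw [Walk.edges_cons, List.mem_cons] at he
        rcases he with rfl | he
        · exact hgD
        · exact hPD _ (hQe _ he)
      · refine ⟨x, z, P.concat hadj, ?_, ?_, ?_⟩
        · have : (Walk.cons hadj.symm P.reverse).IsPath := by
            rw [Walk.cons_isPath_iff]
            exact ⟨hP.reverse, by rwa [Walk.support_reverse, List.mem_reverse]⟩
          have h2 := this.reverse
          rwa [Walk.reverse_cons, Walk.reverse_reverse, ← Walk.concat_eq_append] at h2
        · intro e he
          rw [Walk.concat_eq_append, Walk.edges_append] at he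
          rcases List.mem_append.mp he with he | he
          · exact hPD _ he
          · simp only [Walk.edges_cons, Walk.edges_nil, List.mem_singleton] at he
            rwa [he]
        · rw [Walk.length_concat]; omega
  obtain ⟨x, y, P, hP, hPD, hlen⟩ := key D.card
  have hnodup := hP.isTrail.edges_nodup
  have hsub' : P.edges.toFinset ⊆ D := fun e he => hPD _ (List.mem_toFinset.mp he)
  have hcard := Finset.card_le_card hsub'
  rw [List.toFinset_card_of_nodup hnodup, Walk.length_edges, hlen] at hcard
  omega


lemma my_dart_split {x y : V} (p : G.Walk x y) (d : G.Dart) (hd : d ∈ p.darts) :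
    ∃ (q : G.Walk x d.toProd.1) (r : G.Walk d.toProd.2 y),
      p = q.append (Walk.cons d.adj r) := by
  induction p with
  | nil => simp at hd
  | @cons x w y h r ih =>
    rw [Walk.darts_cons, List.mem_cons] at hd
    rcases hd with rfl | hd
    · exact ⟨Walk.nil, r, rfl⟩
    · obtain ⟨q, r', hqr⟩ := ih hd
      exact ⟨Walk.cons h q, r', by rw [Walk.cons_append, hqr]⟩

/-- Split a cycle at one of its edges: the rest is a path between the edge's endpoints. -/
lemma my_cycle_edge_split {b : V} {C : G.Walk b b} (hC : C.IsCycle) {e : Sym2 V}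
    (he : e ∈ C.edges) :
    ∃ (x y : V) (P : G.Walk y x), e = s(x, y) ∧ P.IsPath ∧ e ∉ P.edges ∧
      P.length + 1 = C.length ∧ (∀ f, f ∈ C.edges ↔ f = e ∨ f ∈ P.edges) := by
  rw [Walk.edges, List.mem_map] at he
  obtain ⟨d, hd, hde⟩ := he
  obtain ⟨q, r, hsplit⟩ := my_dart_split C d hd
  refine ⟨d.toProd.1, d.toProd.2, r.append q, ?_, ?_, ?_, ?_, ?_⟩
  · rw [← hde]; rfl
  · rw [Walk.isPath_def, Walk.support_append, List.nodup_append_comm]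
    have h2 := hC.2
    rw [hsplit, Walk.support_append, List.tail_append_of_ne_nil (Walk.support_ne_nil _),
      Walk.support_cons, List.tail_cons] at h2
    exact h2
  · have htr := hC.isTrail.edges_nodup
    rw [hsplit, Walk.edges_append, Walk.edges_cons] at htr
    have hde' : d.edge = e := hde
    rw [← hde'] at *
    intro hmem
    rw [Walk.edges_append, List.mem_append] at hmem
    rcases hmem with hmem | hmem
    · exact (List.nodup_cons.mp ((List.nodup_append.mp htr).2.1)).1 hmem
    · exact (List.nodup_append'.mp htr).2.2 hmem List.mem_cons_self
  · have := congrArg Walk.length hsplit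
    rw [Walk.length_append, Walk.length_cons] at this
    rw [Walk.length_append]
    omega
  · intro g
    rw [hsplit, Walk.edges_append, Walk.edges_cons, Walk.edges_append, ← hde]
    simp only [List.mem_append, List.mem_cons]
    tauto

/-- Split a cycle at two distinct edges: two paths joining their endpoints. -/
lemma my_cycle_two_edge_split {b : V} {C : G.Walk b b} (hC : C.IsCycle) {e f : Sym2 V}
    (he : e ∈ C.edges) (hf : f ∈ C.edges) (hef : e ≠ f) :
    ∃ (x y u v : V) (Q : G.Walk y u) (R : G.Walk v x),
      e = s(x, y) ∧ f = s(u, v) ∧ Q.IsPath ∧ R.IsPath ∧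
      Q.length + R.length + 2 = C.length ∧
      (∀ g ∈ Q.edges, g ∈ C.edges ∧ g ≠ e ∧ g ≠ f) ∧
      (∀ g ∈ R.edges, g ∈ C.edges ∧ g ≠ e ∧ g ≠ f) := by
  obtain ⟨x, y, P, hexy, hP, heP, hPlen, hmem⟩ := my_cycle_edge_split hC he
  have hfP : f ∈ P.edges := by
    rcases (hmem f).mp hf with rfl | h
    · exact absurd rfl hef.symm
    · exact h
  rw [Walk.edges, List.mem_map] at hfP
  obtain ⟨d, hd, hdf⟩ := hfP
  obtain ⟨Q, R, hsplit⟩ := my_dart_split P d hd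
  have hPedges : P.edges = Q.edges ++ (f :: R.edges) := by
    rw [hsplit, Walk.edges_append, Walk.edges_cons, ← hdf]; rfl
  have hnodup := hP.isTrail.edges_nodup
  rw [hPedges] at hnodup
  have hfQ : f ∉ Q.edges := fun h => (List.nodup_append'.mp hnodup).2.2 h List.mem_cons_self
  have hfR : f ∉ R.edges := (List.nodup_cons.mp (List.nodup_append.mp hnodup).2.1).1
  have hP' : (Q.append (Walk.cons d.adj R)).IsPath := hsplit ▸ hP
  refine ⟨x, y, d.toProd.1, d.toProd.2, Q, R, hexy, by rw [← hdf]; rfl,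
    hP'.of_append_left, ?_, ?_, ?_, ?_⟩
  · exact (Walk.cons_isPath_iff _ _).mp hP'.of_append_right |>.1
  · have := congrArg Walk.length hsplit
    rw [Walk.length_append, Walk.length_cons] at this
    omega
  · intro g hg
    have hgP : g ∈ P.edges := by rw [hPedges, List.mem_append]; exact Or.inl hg
    refine ⟨(hmem g).mpr (Or.inr hgP), fun h => heP (h ▸ hgP), fun h => hfQ (h ▸ hg)⟩
  · intro g hg
    have hgP : g ∈ P.edges := by
      rw [hPedges, List.mem_append]; exact Or.inr (List.mem_cons_of_mem _ hg)
    refine ⟨(hmem g).mpr (Or.inr hgP), fun h => heP (h ▸ hgP), fun h => hfR (h ▸ hg)⟩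

end Helpers

/-- Girth 5: if the second-shortest cycle shares two vertices with a shortest cycle,
then their edge intersection is exactly one edge or exactly two adjacent edges. -/
theorem stmt_2 {V : Type*} [DecidableEq V] (G : SimpleGraph V) (hG : G.Connected)
    (hgirth : G.girth = 5) {a b : V} (C1 : G.Walk a a) (C2 : G.Walk b b)
    (hC1 : C1.IsCycle) (hC1len : C1.length = 5) (hC2 : C2.IsCycle)
    (hne : C2.edges.toFinset ≠ C1.edges.toFinset)
    (hmin : ∀ ⦃w : V⦄ (D : G.Walk w w), D.IsCycle →
      D.edges.toFinset ≠ C1.edges.toFinset → C2.length ≤ D.length)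
    (hshare : ∃ x y : V, x ≠ y ∧ x ∈ C1.support ∧ x ∈ C2.support ∧
      y ∈ C1.support ∧ y ∈ C2.support) :
    (C1.edges.toFinset ∩ C2.edges.toFinset).card = 1 ∨
      ((C1.edges.toFinset ∩ C2.edges.toFinset).card = 2 ∧
        ∃ e f : Sym2 V, e ≠ f ∧ C1.edges.toFinset ∩ C2.edges.toFinset = {e, f} ∧
          ∃ x : V, x ∈ e ∧ x ∈ f) := by
  classical
  set E1 := C1.edges.toFinset with hE1
  set E2 := C2.edges.toFinset with hE2
  have hE1card : E1.card = 5 := by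
    rw [hE1, List.toFinset_card_of_nodup hC1.isTrail.edges_nodup, Walk.length_edges, hC1len]
  have hE2card : E2.card = C2.length := by
    rw [hE2, List.toFinset_card_of_nodup hC2.isTrail.edges_nodup, Walk.length_edges]
  have hm5 : 5 ≤ C2.length := by
    have h1 : G.egirth ≤ (C2.length : ℕ∞) := le_egirth.mp le_rfl b C2 hC2
    have h2 := ENat.toNat_le_toNat h1 (by simp)
    have h3 : G.egirth.toNat = G.girth := rfl
    rw [h3, hgirth] at h2
    simpa using h2
  -- the key length bound from two edge-disjoint paths
  have bound : ∀ (u v : V) (P W : G.Walk u v), P.IsPath → W.IsPath → W.length ≤ 2 →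
      (∀ g ∈ P.edges, g ∈ C2.edges ∧ g ∉ C1.edges) → (∀ g ∈ W.edges, g ∈ C1.edges) →
      u ≠ v → C2.length ≤ P.length + 2 := by
    intro u v P W hPp hWp hW2 hPE hWE huv
    have hPlen : P.length ≠ 0 := fun h => huv (Walk.eq_of_length_eq_zero h)
    have hPedne : P.edges ≠ [] := by
      intro h
      apply hPlen
      rw [← Walk.length_edges, h]
      rfl
    have hne2 : P.edges ≠ W.edges := by
      intro h
      obtain ⟨g, hg⟩ := List.exists_mem_of_ne_nil _ hPedne
      exact (hPE g hg).2 (hWE g (h ▸ hg))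
    obtain ⟨w, C3, hcyc, hsub3⟩ := my_two_paths_cycle P W hPp hWp hne2
    have hC3card : C3.edges.toFinset.card = C3.length := by
      rw [List.toFinset_card_of_nodup hcyc.isTrail.edges_nodup, Walk.length_edges]
    have hC3ne : C3.edges.toFinset ≠ E1 := by
      intro heq
      have hall : ∀ g ∈ C3.edges, g ∈ W.edges := by
        intro g hg
        rcases hsub3 g hg with h | h
        · refine absurd ?_ (hPE g h).2
          have hmem : g ∈ C3.edges.toFinset := List.mem_toFinset.mpr hg
          rw [heq, hE1] at hmem
          exact List.mem_toFinset.mp hmem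
        · exact h
      have hsubW : C3.edges.toFinset ⊆ W.edges.toFinset := fun g hg =>
        List.mem_toFinset.mpr (hall g (List.mem_toFinset.mp hg))
      have h1 := Finset.card_le_card hsubW
      have h2 : W.edges.toFinset.card ≤ W.length := by
        have := List.toFinset_card_le (l := W.edges)
        rwa [Walk.length_edges] at this
      rw [heq, hE1card] at h1
      omega
    have hge := hmin C3 hcyc hC3ne
    have hsub' : C3.edges.toFinset ⊆ P.edges.toFinset ∪ W.edges.toFinset := by
      intro g hg
      rcases hsub3 g (List.mem_toFinset.mp hg) with h | h
      · exact Finset.mem_union_left _ (List.mem_toFinset.mpr h)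
      · exact Finset.mem_union_right _ (List.mem_toFinset.mpr h)
    have h1 := Finset.card_le_card hsub'
    have h2 := Finset.card_union_le P.edges.toFinset W.edges.toFinset
    have h3 : P.edges.toFinset.card ≤ P.length := by
      have := List.toFinset_card_le (l := P.edges)
      rwa [Walk.length_edges] at this
    have h4 : W.edges.toFinset.card ≤ W.length := by
      have := List.toFinset_card_le (l := W.edges)
      rwa [Walk.length_edges] at this
    omega
  have hK2 : (E1 ∩ E2).card ≤ 2 := by
    by_contra hK
    push_neg at hK
    set S := E1 ∩ E2 with hS
    set D := (E1 ∪ E2) \ S with hD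
    have hDsub : ∀ g ∈ D, g ∈ G.edgeSet := by
      intro g hg
      rcases Finset.mem_union.mp (Finset.mem_sdiff.mp hg).1 with h | h
      · exact C1.edges_subset_edgeSet (List.mem_toFinset.mp h)
      · exact C2.edges_subset_edgeSet (List.mem_toFinset.mp h)
    have hDcard : D.card + 2 * S.card = 5 + C2.length := by
      have h1 := Finset.card_sdiff_add_card_eq_card
        (Finset.inter_subset_union (s := E1) (t := E2))
      have h2 := Finset.card_union_add_card_inter E1 E2
      rw [hE1card, hE2card] at h2
      rw [← hS] at h1 h2
      rw [← hD] at h1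
      omega
    have heven : ∀ v : V, Even ((D.filter (fun g => v ∈ g)).card) := by
      intro v
      have hcnt : ∀ {c : V} (Cw : G.Walk c c), Cw.IsCycle →
          ((Cw.edges.toFinset.filter (fun g => v ∈ g)).card) =
            Cw.edges.countP (fun g => decide (v ∈ g)) := by
        intro c Cw hCw
        rw [List.countP_eq_length_filter]
        have hset : Cw.edges.toFinset.filter (fun g => v ∈ g) =
            (Cw.edges.filter (fun g => decide (v ∈ g))).toFinset := by
          ext g
          simp [List.mem_filter]
        rw [hset, List.toFinset_card_of_nodup (hCw.isTrail.edges_nodup.filter _)]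
      have hevenA : Even ((E1.filter (fun g => v ∈ g)).card) := by
        rw [hE1, hcnt C1 hC1]
        exact (hC1.isTrail.even_countP_edges_iff v).mpr (fun h => absurd rfl h)
      have hevenB : Even ((E2.filter (fun g => v ∈ g)).card) := by
        rw [hE2, hcnt C2 hC2]
        exact (hC2.isTrail.even_countP_edges_iff v).mpr (fun h => absurd rfl h)
      set A := E1.filter (fun g => v ∈ g) with hA
      set B := E2.filter (fun g => v ∈ g) with hB
      have hDf : D.filter (fun g => v ∈ g) = (A ∪ B) \ (A ∩ B) := by
        ext g
        simp only [hD, hS, hA, hB, Finset.mem_filter, Finset.mem_sdiff, Finset.mem_union,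
          Finset.mem_inter]
        tauto
      rw [hDf]
      have h1 := Finset.card_sdiff_add_card_eq_card
        (Finset.inter_subset_union (s := A) (t := B))
      have h2 := Finset.card_union_add_card_inter A B
      rw [Nat.even_iff] at hevenA hevenB ⊢
      omega
    have hDne : D.Nonempty := by
      rw [Finset.nonempty_iff_ne_empty]
      intro h0
      apply hne
      have key : ∀ g, g ∈ E1 ∪ E2 → g ∈ S := by
        intro g hg
        by_contra hgs
        have : g ∈ D := Finset.mem_sdiff.mpr ⟨hg, hgs⟩
        rw [h0] at this
        simp at this
      refine Finset.Subset.antisymm ?_ ?_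
      · intro g hg
        exact (Finset.mem_inter.mp (key g (Finset.mem_union_right _ hg))).1
      · intro g hg
        exact (Finset.mem_inter.mp (key g (Finset.mem_union_left _ hg))).2
    obtain ⟨w, C3, hcyc, hsub3⟩ := my_even_cycle D hDsub heven hDne
    have hC3ne : C3.edges.toFinset ≠ E1 := by
      intro heq
      obtain ⟨s, hs⟩ := Finset.card_pos.mp (show 0 < S.card by omega)
      have hs1 : s ∈ E1 := (Finset.mem_inter.mp hs).1
      have h1 : s ∈ C3.edges := List.mem_toFinset.mp (heq ▸ hs1)
      exact (Finset.mem_sdiff.mp (hsub3 s h1)).2 hs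
    have hge := hmin C3 hcyc hC3ne
    have hsubD : C3.edges.toFinset ⊆ D := fun g hg => hsub3 g (List.mem_toFinset.mp hg)
    have hcard3 := Finset.card_le_card hsubD
    rw [List.toFinset_card_of_nodup hcyc.isTrail.edges_nodup, Walk.length_edges] at hcard3
    omega
  have hK1 : 1 ≤ (E1 ∩ E2).card := by
    rw [Nat.one_le_iff_ne_zero]
    intro hk0
    have hS : E1 ∩ E2 = ∅ := Finset.card_eq_zero.mp hk0
    obtain ⟨x, y, hxy, hx1, hx2, hy1, hy2⟩ := hshare
    obtain ⟨P1, P2, hP1p, hP2p, hPlen, hP1e, hP2e⟩ := my_vert_split hC2 hx2 hy2 hxy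
    obtain ⟨A1, A2, hA1p, hA2p, hAlen, hA1e, hA2e⟩ := my_vert_split hC1 hx1 hy1 hxy
    rw [hC1len] at hAlen
    have hdisj : ∀ g, g ∈ C2.edges → g ∉ C1.edges := by
      intro g h2 h1
      have : g ∈ E1 ∩ E2 :=
        Finset.mem_inter.mpr ⟨List.mem_toFinset.mpr h1, List.mem_toFinset.mpr h2⟩
      rw [hS] at this
      simp at this
    have hPcond1 : ∀ g ∈ P1.edges, g ∈ C2.edges ∧ g ∉ C1.edges :=
      fun g hg => ⟨hP1e g hg, hdisj g (hP1e g hg)⟩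
    have hPcond2 : ∀ g ∈ P2.edges, g ∈ C2.edges ∧ g ∉ C1.edges :=
      fun g hg => ⟨hP2e g hg, hdisj g (hP2e g hg)⟩
    have hb1 : C2.length ≤ P1.length + 2 := by
      by_cases hA : A1.length ≤ 2
      · exact bound x y P1 A1 hP1p hA1p hA hPcond1 hA1e hxy
      · refine bound x y P1 A2.reverse hP1p hA2p.reverse ?_ hPcond1 ?_ hxy
        · rw [Walk.length_reverse]; omega
        · intro g hg
          rw [Walk.edges_reverse, List.mem_reverse] at hg
          exact hA2e g hg
    have hb2 : C2.length ≤ P2.length + 2 := by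
      by_cases hA : A2.length ≤ 2
      · exact bound y x P2 A2 hP2p hA2p hA hPcond2 hA2e hxy.symm
      · refine bound y x P2 A1.reverse hP2p hA1p.reverse ?_ hPcond2 ?_ hxy.symm
        · rw [Walk.length_reverse]; omega
        · intro g hg
          rw [Walk.edges_reverse, List.mem_reverse] at hg
          exact hA1e g hg
    omega
  rcases (by omega : (E1 ∩ E2).card = 1 ∨ (E1 ∩ E2).card = 2) with hk | hk
  · exact Or.inl hk
  · obtain ⟨e, f, hef, hSef⟩ := Finset.card_eq_two.mp hk
    refine Or.inr ⟨hk, e, f, hef, hSef, ?_⟩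
    by_contra hshared
    push_neg at hshared
    have heS : e ∈ E1 ∩ E2 := by rw [hSef]; simp
    have hfS : f ∈ E1 ∩ E2 := by rw [hSef]; simp
    have he1 : e ∈ C1.edges := List.mem_toFinset.mp (Finset.mem_inter.mp heS).1
    have he2 : e ∈ C2.edges := List.mem_toFinset.mp (Finset.mem_inter.mp heS).2
    have hf1 : f ∈ C1.edges := List.mem_toFinset.mp (Finset.mem_inter.mp hfS).1
    have hf2 : f ∈ C2.edges := List.mem_toFinset.mp (Finset.mem_inter.mp hfS).2
    obtain ⟨x, y, u, v, Q, R, hexy, hfuv, hQp, hRp, hlen2, hQc, hRc⟩ :=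
      my_cycle_two_edge_split hC2 he2 hf2 hef
    have hye : y ∈ e := by rw [hexy]; simp
    have hxe : x ∈ e := by rw [hexy]; simp
    have huf : u ∈ f := by rw [hfuv]; simp
    have hvf : v ∈ f := by rw [hfuv]; simp
    have hyu : y ≠ u := fun h => hshared y hye (h ▸ huf)
    have hvx : v ≠ x := fun h => hshared x hxe (h ▸ hvf)
    have hy1 : y ∈ C1.support := C1.snd_mem_support_of_mem_edges (hexy ▸ he1)
    have hx1 : x ∈ C1.support := C1.fst_mem_support_of_mem_edges (hexy ▸ he1)
    have hu1 : u ∈ C1.support := C1.fst_mem_support_of_mem_edges (hfuv ▸ hf1)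
    have hv1 : v ∈ C1.support := C1.snd_mem_support_of_mem_edges (hfuv ▸ hf1)
    have hQcond : ∀ g ∈ Q.edges, g ∈ C2.edges ∧ g ∉ C1.edges := by
      intro g hg
      obtain ⟨hgC2, hge, hgf⟩ := hQc g hg
      refine ⟨hgC2, fun hgC1 => ?_⟩
      have : g ∈ E1 ∩ E2 :=
        Finset.mem_inter.mpr ⟨List.mem_toFinset.mpr hgC1, List.mem_toFinset.mpr hgC2⟩
      rw [hSef] at this
      rcases Finset.mem_insert.mp this with h | h
      · exact hge h
      · exact hgf (Finset.mem_singleton.mp h)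
    have hRcond : ∀ g ∈ R.edges, g ∈ C2.edges ∧ g ∉ C1.edges := by
      intro g hg
      obtain ⟨hgC2, hge, hgf⟩ := hRc g hg
      refine ⟨hgC2, fun hgC1 => ?_⟩
      have : g ∈ E1 ∩ E2 :=
        Finset.mem_inter.mpr ⟨List.mem_toFinset.mpr hgC1, List.mem_toFinset.mpr hgC2⟩
      rw [hSef] at this
      rcases Finset.mem_insert.mp this with h | h
      · exact hge h
      · exact hgf (Finset.mem_singleton.mp h)
    obtain ⟨B1, B2, hB1p, hB2p, hBlen, hB1e, hB2e⟩ := my_vert_split hC1 hy1 hu1 hyu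
    rw [hC1len] at hBlen
    have hbQ : C2.length ≤ Q.length + 2 := by
      by_cases hB : B1.length ≤ 2
      · exact bound y u Q B1 hQp hB1p hB hQcond hB1e hyu
      · refine bound y u Q B2.reverse hQp hB2p.reverse ?_ hQcond ?_ hyu
        · rw [Walk.length_reverse]; omega
        · intro g hg
          rw [Walk.edges_reverse, List.mem_reverse] at hg
          exact hB2e g hg
    obtain ⟨B1', B2', hB1p', hB2p', hBlen', hB1e', hB2e'⟩ := my_vert_split hC1 hv1 hx1 hvx
    rw [hC1len] at hBlen'
    have hbR : C2.length ≤ R.length + 2 := by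
      by_cases hB : B1'.length ≤ 2
      · exact bound v x R B1' hRp hB1p' hB hRcond hB1e' hvx
      · refine bound v x R B2'.reverse hRp hB2p'.reverse ?_ hRcond ?_ hvx
        · rw [Walk.length_reverse]; omega
        · intro g hg
          rw [Walk.edges_reverse, List.mem_reverse] at hg
          exact hB2e' g hg
    omega
end

section
/- Let G be a connected graph with girth 5, and let C1 be a 5-cycle in G that is a shortest cycle. Suppose C2 is a shortest cycle among all cycles of G distinct from C1, and C1 and C2 have exactly two common vertices u and v that are adjacent on C1. Then the edge uv belongs to C2. -/
open SimpleGraph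

private lemma walk_support_mem_edge {V : Type*} {G : SimpleGraph V} :
    ∀ {x y : V} (p : G.Walk x y) (z : V), z ∈ p.support →
      z = y ∨ ∃ w, s(z, w) ∈ p.edges := by
  intro x y p
  induction p with
  | nil => intro z hz; left; simpa using hz
  | @cons a c d h q ih =>
    intro z hz
    rw [SimpleGraph.Walk.support_cons, List.mem_cons] at hz
    rcases hz with rfl | hz
    · exact Or.inr ⟨c, by simp⟩
    · rcases ih z hz with rfl | ⟨w, hw⟩
      · exact Or.inl rfl
      · exact Or.inr ⟨w, by simp [hw]⟩

/-- Girth 5: if a shortest 5-cycle `C1` and the second-shortest cycle `C2` meet in exactly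
two vertices `u, v` that are adjacent on `C1`, then the edge `uv` lies on `C2`. -/
theorem stmt_3 {V : Type*} [DecidableEq V] (G : SimpleGraph V) (hG : G.Connected)
    (hgirth : G.girth = 5) {a b : V} (C1 : G.Walk a a) (C2 : G.Walk b b)
    (hC1 : C1.IsCycle) (hC1len : C1.length = 5) (hC2 : C2.IsCycle)
    (hne : C2.edges.toFinset ≠ C1.edges.toFinset)
    (hmin : ∀ ⦃w : V⦄ (D : G.Walk w w), D.IsCycle →
      D.edges.toFinset ≠ C1.edges.toFinset → C2.length ≤ D.length)
    (u v : V) (huv : u ≠ v)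
    (hinter : {x : V | x ∈ C1.support ∧ x ∈ C2.support} = {u, v})
    (hedge : s(u, v) ∈ C1.edges) :
    s(u, v) ∈ C2.edges := by
  by_contra hcon
  have hadj : G.Adj u v := C1.adj_of_mem_edges hedge
  have hset := Set.ext_iff.mp hinter
  have hu1 : u ∈ C1.support ∧ u ∈ C2.support := (hset u).mpr (by simp)
  have hv1 : v ∈ C1.support ∧ v ∈ C2.support := (hset v).mpr (by simp)
  -- rotate C2 so it starts at u
  set C : G.Walk u u := C2.rotate u hu1.2 with hCdef
  have hCcyc : C.IsCycle := hC2.rotate hu1.2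
  have hCne : ¬ C.Nil := hCcyc.not_nil
  have hCedges : ∀ e, e ∈ C.edges ↔ e ∈ C2.edges :=
    fun e => (SimpleGraph.Walk.rotate_edges C2 u hu1.2).mem_iff
  have hClen : C.length = C2.length := by
    rw [← SimpleGraph.Walk.length_edges, ← SimpleGraph.Walk.length_edges]
    exact (SimpleGraph.Walk.rotate_edges C2 u hu1.2).perm.length_eq
  have hCsupp : ∀ z, z ∈ C.support → z ∈ C2.support := by
    intro z hz
    rw [SimpleGraph.Walk.support_eq_cons C, List.mem_cons] at hz
    rcases hz with rfl | hz
    · exact hu1.2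
    · have := (SimpleGraph.Walk.support_rotate C2 u hu1.2).perm.mem_iff.mp hz
      exact List.tail_subset _ this
  -- the tail of C is a path from C.getVert 1 to u
  have htp : C.tail.IsPath := by
    rw [SimpleGraph.Walk.isPath_def, SimpleGraph.Walk.support_tail_of_not_nil C hCne]
    exact hCcyc.support_nodup
  have hCtailedges : ∀ e, e ∈ C.tail.edges → e ∈ C.edges := by
    intro e he
    rw [← SimpleGraph.Walk.cons_tail_eq C hCne, SimpleGraph.Walk.edges_cons]
    exact List.mem_cons_of_mem _ he
  -- v is in the tail's support
  have hvtail2 : v ∈ C2.support.tail := by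
    have h := hv1.2
    rw [SimpleGraph.Walk.support_eq_cons C2, List.mem_cons] at h
    rcases h with rfl | h
    · have := SimpleGraph.Walk.end_mem_support C2.tail
      rwa [SimpleGraph.Walk.support_tail_of_not_nil C2 hC2.not_nil] at this
    · exact h
  have hv2 : v ∈ C.tail.support := by
    rw [SimpleGraph.Walk.support_tail_of_not_nil C hCne]
    exact (SimpleGraph.Walk.support_rotate C2 u hu1.2).perm.mem_iff.mpr hvtail2
  set P2 : G.Walk v u := C.tail.dropUntil v hv2 with hP2def
  have hP2path : P2.IsPath := htp.dropUntil hv2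
  have hP2edges : ∀ e, e ∈ P2.edges → e ∈ C2.edges := fun e he =>
    (hCedges e).mp (hCtailedges e (SimpleGraph.Walk.edges_dropUntil_subset _ hv2 he))
  set D : G.Walk u u := SimpleGraph.Walk.cons hadj P2 with hDdef
  have hDcyc : D.IsCycle := by
    rw [hDdef, SimpleGraph.Walk.cons_isCycle_iff]
    exact ⟨hP2path, fun h => hcon (hP2edges _ h)⟩
  -- length estimate
  have hfirstedge : s(u, C.getVert 1) ∈ C.edges := by
    rw [← SimpleGraph.Walk.cons_tail_eq C hCne, SimpleGraph.Walk.edges_cons]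
    simp
  have hsnd : C.getVert 1 ≠ v := by
    rintro h
    exact hcon ((hCedges _).mp (h ▸ hfirstedge))
  have hTlen : (C.tail.takeUntil v hv2).length ≠ 0 := by
    intro h
    have hnil : (C.tail.takeUntil v hv2).Nil := SimpleGraph.Walk.nil_iff_length_eq.mpr h
    have := SimpleGraph.Walk.nil_iff_support_eq.mp hnil
    have hvmem := SimpleGraph.Walk.end_mem_support (C.tail.takeUntil v hv2)
    rw [this, List.mem_singleton] at hvmem
    exact hsnd hvmem.symm
  have hsplit : (C.tail.takeUntil v hv2).length + P2.length = C.tail.length := by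
    have := congrArg SimpleGraph.Walk.length (C.tail.take_spec hv2)
    rwa [SimpleGraph.Walk.length_append] at this
  have hCtl : C.tail.length + 1 = C.length := SimpleGraph.Walk.length_tail_add_one hCne
  have hDlen : D.length = P2.length + 1 := by simp [hDdef]
  have hDlt : D.length < C2.length := by omega
  -- show D's edge set differs from C1's
  have hDne : D.edges.toFinset ≠ C1.edges.toFinset := by
    intro heq
    have hDmem : ∀ e, e ∈ D.edges ↔ e ∈ C1.edges := by
      intro e
      rw [← List.mem_toFinset, heq, List.mem_toFinset]
    have hsub : ∀ z ∈ D.support, z ∈ ({u, v} : Set V) := by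
      intro z hz
      rw [← hinter]
      refine ⟨?_, ?_⟩
      · rcases walk_support_mem_edge D z hz with rfl | ⟨w, hw⟩
        · exact hu1.1
        · exact C1.fst_mem_support_of_mem_edges ((hDmem _).mp hw)
      · rw [hDdef, SimpleGraph.Walk.support_cons, List.mem_cons] at hz
        rcases hz with rfl | hz
        · exact hu1.2
        · have hz' := SimpleGraph.Walk.support_dropUntil_subset _ hv2 hz
          rw [SimpleGraph.Walk.support_tail_of_not_nil C hCne] at hz'
          exact hCsupp z (List.tail_subset _ hz')
    have hlen3 : 3 ≤ D.length := hDcyc.three_le_length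
    have hnd : D.support.tail.Nodup := hDcyc.support_nodup
    have hsubF : D.support.tail.toFinset ⊆ ({u, v} : Finset V) := by
      intro z hz
      rw [List.mem_toFinset] at hz
      have := hsub z (List.tail_subset _ hz)
      simp only [Set.mem_insert_iff, Set.mem_singleton_iff] at this
      simpa using this
    have hcard1 : D.support.tail.toFinset.card = D.support.tail.length :=
      List.toFinset_card_of_nodup hnd
    have hcard2 : D.support.tail.length = D.length := by
      have h1 := SimpleGraph.Walk.length_support D
      rw [SimpleGraph.Walk.support_eq_cons D, List.length_cons] at h1
      omega
    have := Finset.card_le_card hsubF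
    have hc2 : ({u, v} : Finset V).card ≤ 2 := Finset.card_insert_le _ _ |>.trans (by simp)
    omega
  exact absurd (hmin D hDcyc hDne) (not_le.mpr hDlt)
end

section
/- A connected graph G with m edges satisfies src(G) ≤ m − 2 if and only if G is not a tree. -/
open SimpleGraph

/-- An edge-coloring `c` is a strong rainbow coloring of `G` if every pair of vertices is
joined by a geodesic (shortest path) whose edges receive pairwise distinct colors. -/
def SimpleGraph.IsStrongRainbowColoring {V : Type*} (G : SimpleGraph V) (c : Sym2 V → ℕ) : Prop :=
  ∀ u v : V, ∃ p : G.Walk u v, p.IsPath ∧ p.length = G.dist u v ∧ (p.edges.map c).Nodup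

/-- The strong rainbow connection number: the least number of colors in a strong rainbow
coloring of `G`. -/
noncomputable def SimpleGraph.src {V : Type*} (G : SimpleGraph V) : ℕ :=
  sInf {n : ℕ | ∃ c : Sym2 V → Fin n, ∀ u v : V, ∃ p : G.Walk u v,
    p.IsPath ∧ p.length = G.dist u v ∧ (p.edges.map c).Nodup}

namespace SRCAux

variable {V : Type*} {G : SimpleGraph V}

lemma end_mem_support_tail {u v : V} (p : G.Walk u v) (hp : ¬ p.Nil) :
    v ∈ p.support.tail := by
  cases p with
  | nil => simp at hp
  | cons h q => simpa using q.end_mem_support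

lemma length_one_walk {u v : V} (p : G.Walk u v) (h : p.length = 1) :
    G.Adj u v ∧ p.edges = [s(u, v)] := by
  cases p with
  | nil => simp at h
  | cons hadj q =>
    cases q with
    | nil => exact ⟨hadj, rfl⟩
    | cons h' q' => simp [Walk.length_cons] at h

/-- Split a walk at position `n`. -/
lemma exists_split {u v : V} (p : G.Walk u v) (n : ℕ) (hn : n ≤ p.length) :
    ∃ (x : V) (q : G.Walk u x) (r : G.Walk x v), p = q.append r ∧ q.length = n := by
  induction n generalizing u p with
  | zero => exact ⟨u, Walk.nil, p, rfl, rfl⟩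
  | succ n ih =>
    cases p with
    | nil => simp at hn
    | cons h q =>
      obtain ⟨x, q', r', hq, hlen⟩ := ih q (by simpa [Walk.length_cons] using hn)
      exact ⟨x, Walk.cons h q', r', by rw [Walk.cons_append, ← hq], by simp [hlen]⟩

/-- Both pieces of a splitting of a cycle are paths. -/
lemma paths_of_cycle_split {a b : V} {S : G.Walk a b} {T : G.Walk b a}
    (hcyc : (S.append T).IsCycle) (hS : ¬ S.Nil) (hT : ¬ T.Nil) :
    S.IsPath ∧ T.IsPath := by
  have hnd : ((S.append T).support.tail).Nodup := hcyc.support_nodup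
  rw [Walk.tail_support_append] at hnd
  rw [List.nodup_append] at hnd
  obtain ⟨hndS, hndT, hdisj⟩ := hnd
  constructor
  · apply Walk.IsPath.mk'
    rw [Walk.support_eq_cons, List.nodup_cons]
    exact ⟨fun ha => (hdisj _ ha _ (end_mem_support_tail T hT) rfl).elim, hndS⟩
  · apply Walk.IsPath.mk'
    rw [Walk.support_eq_cons, List.nodup_cons]
    exact ⟨fun hb => (hdisj _ (end_mem_support_tail S hS) _ hb rfl).elim, hndT⟩

/-- Rotation of a cycle presented as an append. -/
lemma isCycle_append_comm {a b : V} {S : G.Walk a b} {T : G.Walk b a}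
    (hcyc : (S.append T).IsCycle) : (T.append S).IsCycle := by
  rw [Walk.isCycle_def] at hcyc ⊢
  obtain ⟨htrail, hne, hnd⟩ := hcyc
  refine ⟨?_, ?_, ?_⟩
  · rw [Walk.isTrail_def] at htrail ⊢
    rw [Walk.edges_append] at htrail ⊢
    exact List.nodup_append_comm.mp htrail
  · intro h
    have h1 : T.length + S.length = 0 := by
      have := congrArg Walk.length h
      simpa [Walk.length_append] using this
    have hS : S.Nil := Walk.nil_iff_length_eq.mpr (by omega)
    have hT : T.Nil := Walk.nil_iff_length_eq.mpr (by omega)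
    apply hne
    have : (S.append T).length = 0 := by rw [Walk.length_append]; omega
    cases S with
    | nil => cases T with
      | nil => rfl
      | cons h q => simp at hT
    | cons h q => simp at hS
  · rw [Walk.tail_support_append] at hnd ⊢
    exact List.nodup_append_comm.mp hnd


lemma cycle_of_two_distinct_paths :
    ∀ (n : ℕ) {u v : V} (p q : G.Walk u v), p.length + q.length ≤ n →
      p.IsPath → q.IsPath → p ≠ q →
      ∃ (x : V) (w : G.Walk x x), w.IsCycle ∧ w.length ≤ p.length + q.length := by
  intro n
  induction n with
  | zero =>
    intro u v p q hlen hp hq hne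
    classical
    cases p with
    | nil =>
      exact absurd ((Walk.isPath_iff_eq_nil (p := q)).mp hq).symm hne
    | cons h r => simp [Walk.length_cons] at hlen
  | succ n ih =>
    intro u v p q hlen hp hq hne
    classical
    cases p with
    | nil =>
      exact absurd ((Walk.isPath_iff_eq_nil (p := q)).mp hq).symm hne
    | cons ha p' =>
      rename_i a
      cases q with
      | nil =>
        have := (Walk.isPath_iff_eq_nil (p := _)).mp hp
        simp at this
      | cons hb q' =>
        rename_i b
        by_cases hab : a = b
        · subst hab
          have hne' : p' ≠ q' := by
            intro h; exact hne (by rw [h])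
          obtain ⟨x, w, hw, hwl⟩ := ih p' q'
            (by simp [Walk.length_cons] at hlen ⊢; omega)
            hp.of_cons hq.of_cons hne'
          exact ⟨x, w, hw, by simp [Walk.length_cons]; omega⟩
        · -- first edges differ; build a cycle through the first edge of p
          have hup' : u ∉ p'.support := ((Walk.cons_isPath_iff _ _).mp hp).2
          have huq' : u ∉ q'.support := ((Walk.cons_isPath_iff _ _).mp hq).2
          set W : G.Walk a u := p'.append (Walk.cons hb q').reverse with hW
          have hnotin : s(u, a) ∉ W.bypass.edges := by
            intro hmem
            have hmem' : s(u, a) ∈ W.edges := Walk.edges_bypass_subset _ hmem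
            rw [hW, Walk.edges_append, List.mem_append] at hmem'
            rcases hmem' with h1 | h2
            · exact hup' (Walk.fst_mem_support_of_mem_edges _ h1)
            · rw [Walk.edges_reverse, List.mem_reverse] at h2
              rw [Walk.edges_cons, List.mem_cons] at h2
              rcases h2 with h3 | h4
              · exact hab (Sym2.congr_right.mp h3)
              · exact huq' (Walk.fst_mem_support_of_mem_edges _ h4)
          refine ⟨u, Walk.cons ha W.bypass, ?_, ?_⟩
          · exact (Walk.cons_isCycle_iff _ _).mpr ⟨Walk.bypass_isPath _, hnotin⟩
          · have h1 : W.bypass.length ≤ W.length := Walk.length_bypass_le _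
            have h2 : W.length = p'.length + (q'.length + 1) := by
              simp [hW, Walk.length_append, Walk.length_reverse]
            simp only [Walk.length_cons]
            omega

lemma egirth_le_cycle {x : V} {w : G.Walk x x} (hw : w.IsCycle) :
    G.egirth ≤ w.length := by
  rw [SimpleGraph.egirth]
  exact (iInf_le _ _).trans ((iInf_le _ _).trans (iInf_le _ hw))

lemma dist_of_cycle_split {g : ℕ} (hconn : G.Connected) (hegirth : G.egirth = (g : ℕ∞))
    {a b : V} (S : G.Walk a b) (T : G.Walk b a) (hcyc : (S.append T).IsCycle)
    (hS : S.length ≠ 0) (hT : T.length ≠ 0) (hlen : S.length + T.length = g) :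
    G.dist a b = min S.length T.length := by
  have hSnil : ¬ S.Nil := fun h => hS (Walk.nil_iff_length_eq.mp h)
  have hTnil : ¬ T.Nil := fun h => hT (Walk.nil_iff_length_eq.mp h)
  obtain ⟨hSpath, hTpath⟩ := paths_of_cycle_split hcyc hSnil hTnil
  have hub1 : G.dist a b ≤ S.length := SimpleGraph.dist_le S
  have hub2 : G.dist a b ≤ T.length := by
    rw [SimpleGraph.dist_comm]
    exact SimpleGraph.dist_le T
  obtain ⟨Q, hQpath, hQlen⟩ := hconn.exists_path_of_dist a b
  by_contra hne
  have hlt : G.dist a b < min S.length T.length := by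
    rcases lt_or_eq_of_le (le_min hub1 hub2) with h | h
    · exact h
    · exact absurd h hne
  have hQS : Q ≠ S := by
    intro h
    rw [h] at hQlen
    omega
  obtain ⟨x, w, hw, hwl⟩ := cycle_of_two_distinct_paths (Q.length + S.length) Q S le_rfl
    hQpath hSpath hQS
  have hgle : (g : ℕ∞) ≤ (w.length : ℕ∞) := hegirth ▸ egirth_le_cycle hw
  have hgle' : g ≤ w.length := by exact_mod_cast hgle
  omega

lemma split_one {v' : V} {e : Sym2 V} :
    ∀ {u : V} (p : G.Walk u v'), e ∈ p.edges →
      ∃ (y y' : V) (hyy : G.Adj y y') (w2 : G.Walk u y) (w3 : G.Walk y' v'),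
        p = w2.append (Walk.cons hyy w3) ∧ s(y, y') = e := by
  intro u p
  induction p with
  | nil => simp
  | cons h q ih =>
    rename_i x z _
    intro he
    rw [Walk.edges_cons, List.mem_cons] at he
    by_cases hfirst : s(x, z) = e
    · exact ⟨x, z, h, Walk.nil, q, by simp, hfirst⟩
    · obtain he' := he.resolve_left (fun hh => hfirst hh.symm)
      obtain ⟨y, y', hyy, w2, w3, heq, hsym⟩ := ih he'
      exact ⟨y, y', hyy, Walk.cons h w2, w3, by rw [Walk.cons_append, ← heq], hsym⟩

lemma split_two {u v : V} {e f : Sym2 V} :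
    ∀ (p : G.Walk u v), e ∈ p.edges → f ∈ p.edges → e ≠ f →
      ∃ (x x' y y' : V) (hxx : G.Adj x x') (hyy : G.Adj y y')
        (w1 : G.Walk u x) (w2 : G.Walk x' y) (w3 : G.Walk y' v),
        p = w1.append (Walk.cons hxx (w2.append (Walk.cons hyy w3))) ∧
          ((s(x, x') = e ∧ s(y, y') = f) ∨ (s(x, x') = f ∧ s(y, y') = e)) := by
  intro p
  induction p with
  | nil => simp
  | cons h q ih =>
    rename_i x z _
    intro he hf hef
    rw [Walk.edges_cons, List.mem_cons] at he hf
    by_cases hfirst : s(x, z) = e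
    · have hf' : f ∈ q.edges := by
        rcases hf with h1 | h2
        · exact absurd (hfirst ▸ h1.symm) hef
        · exact h2
      obtain ⟨y, y', hyy, w2, w3, heq, hsym⟩ := split_one q hf'
      exact ⟨x, z, y, y', h, hyy, Walk.nil, w2, w3, by simp [heq], Or.inl ⟨hfirst, hsym⟩⟩
    · by_cases hsecond : s(x, z) = f
      · have he' : e ∈ q.edges := by
          rcases he with h1 | h2
          · exact absurd (hsecond ▸ h1) hef
          · exact h2
        obtain ⟨y, y', hyy, w2, w3, heq, hsym⟩ := split_one q he'
        exact ⟨x, z, y, y', h, hyy, Walk.nil, w2, w3, by simp [heq], Or.inr ⟨hsecond, hsym⟩⟩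
      · obtain ⟨x1, x1', y, y', hxx, hyy, w1, w2, w3, heq, hsym⟩ :=
          ih (he.resolve_left (fun hh => hfirst hh.symm))
             (hf.resolve_left (fun hh => hsecond hh.symm)) hef
        exact ⟨x1, x1', y, y', hxx, hyy, Walk.cons h w1, w2, w3,
          by rw [Walk.cons_append, ← heq], hsym⟩

lemma geodesic_two_edges (hconn : G.Connected) {u v : V} {p : G.Walk u v}
    (hlen : p.length = G.dist u v) {e f : Sym2 V}
    (hef : e ≠ f) (he : e ∈ p.edges) (hf : f ∈ p.edges) :
    ∃ x x' y y', ((s(x, x') = e ∧ s(y, y') = f) ∨ (s(x, x') = f ∧ s(y, y') = e)) ∧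
      G.dist x y' = G.dist x' y + 2 := by
  obtain ⟨x, x', y, y', hxx, hyy, w1, w2, w3, heq, hsym⟩ := split_two p he hf hef
  refine ⟨x, x', y, y', hsym, ?_⟩
  -- lengths
  have hplen : p.length = w1.length + (w2.length + w3.length) + 2 := by
    rw [heq]; simp [Walk.length_append, Walk.length_cons]; omega
  have t1 : G.dist u x ≤ w1.length := SimpleGraph.dist_le w1
  have t3 : G.dist y' v ≤ w3.length := SimpleGraph.dist_le w3
  have t2 : G.dist x y' ≤ w2.length + 2 := by
    have := SimpleGraph.dist_le (Walk.cons hxx (w2.append (Walk.cons hyy Walk.nil)))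
    simpa [Walk.length_cons, Walk.length_append] using this
  have t4 : G.dist x' y ≤ w2.length := SimpleGraph.dist_le w2
  have tri : G.dist u v ≤ G.dist u x + G.dist x y' + G.dist y' v :=
    (hconn.dist_triangle (v := x)).trans (by
      have := hconn.dist_triangle (u := x) (v := y') (w := v)
      omega)
  have tri2 : G.dist x y' ≤ 1 + G.dist x' y + 1 := by
    have d1 : G.dist x x' ≤ 1 := by
      have := SimpleGraph.dist_le (Walk.cons hxx Walk.nil)
      simpa using this
    have d2 : G.dist y y' ≤ 1 := by
      have := SimpleGraph.dist_le (Walk.cons hyy Walk.nil)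
      simpa using this
    have h1 : G.dist x y' ≤ G.dist x x' + G.dist x' y' := hconn.dist_triangle
    have h2 : G.dist x' y' ≤ G.dist x' y + G.dist y y' := hconn.dist_triangle
    omega
  omega

lemma no_geo_close (hconn : G.Connected) {a b c d : V}
    (hne : s(a, b) ≠ s(c, d))
    (h1 : G.dist a c ≤ 1) (h2 : G.dist a d ≤ 1) (h3 : G.dist b c ≤ 1) (h4 : G.dist b d ≤ 1)
    {u v : V} {p : G.Walk u v} (hl : p.length = G.dist u v)
    (hep : s(a, b) ∈ p.edges) (hfp : s(c, d) ∈ p.edges) : False := by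
  obtain ⟨x, x', y, y', hsym, hdist⟩ := geodesic_two_edges hconn hl hne hep hfp
  have h1' : G.dist c a ≤ 1 := by rwa [SimpleGraph.dist_comm]
  have h2' : G.dist d a ≤ 1 := by rwa [SimpleGraph.dist_comm]
  have h3' : G.dist c b ≤ 1 := by rwa [SimpleGraph.dist_comm]
  have h4' : G.dist d b ≤ 1 := by rwa [SimpleGraph.dist_comm]
  rcases hsym with ⟨hxe, hyf⟩ | ⟨hxe, hyf⟩ <;>
    rw [Sym2.eq_iff] at hxe hyf <;>
    rcases hxe with ⟨rfl, rfl⟩ | ⟨rfl, rfl⟩ <;> rcases hyf with ⟨rfl, rfl⟩ | ⟨rfl, rfl⟩ <;>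
      omega

lemma no_geodesic_both {g : ℕ} (hconn : G.Connected) (hegirth : G.egirth = (g : ℕ∞))
    (hg4 : 4 ≤ g) {a b c d : V}
    (F : G.Walk a b) (M : G.Walk b c) (F' : G.Walk c d) (R : G.Walk d a)
    (hcyc : (F.append (M.append (F'.append R))).IsCycle)
    (hF : F.length = 1) (hM : M.length = g / 2 - 1) (hF' : F'.length = 1)
    (hR : R.length = g - g / 2 - 1)
    (hne : s(a, b) ≠ s(c, d))
    {u v : V} {p : G.Walk u v} (hlen : p.length = G.dist u v)
    (he : s(a, b) ∈ p.edges) (hf : s(c, d) ∈ p.edges) : False := by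
  set k := g / 2 with hk
  have hac : G.dist a c = k := by
    have h := dist_of_cycle_split hconn hegirth (F.append M) (F'.append R)
      (by simpa only [Walk.append_assoc] using hcyc)
      (by simp only [Walk.length_append]; omega)
      (by simp only [Walk.length_append]; omega)
      (by simp only [Walk.length_append]; omega)
    rw [h]
    simp only [Walk.length_append]
    rw [min_eq_left (by omega)]
    omega
  have had : G.dist a d = g - k - 1 := by
    have h := dist_of_cycle_split hconn hegirth (F.append (M.append F')) R
      (by simpa only [Walk.append_assoc] using hcyc)
      (by simp only [Walk.length_append]; omega)
      (by omega)
      (by simp only [Walk.length_append]; omega)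
    rw [h]
    simp only [Walk.length_append]
    rw [min_eq_right (by omega)]
    omega
  have hcycb : ((M.append (F'.append R)).append F).IsCycle := isCycle_append_comm hcyc
  have hbc : G.dist b c = k - 1 := by
    have h := dist_of_cycle_split hconn hegirth M (F'.append (R.append F))
      (by simpa only [Walk.append_assoc] using hcycb)
      (by omega)
      (by simp only [Walk.length_append]; omega)
      (by simp only [Walk.length_append]; omega)
    rw [h]
    simp only [Walk.length_append]
    rw [min_eq_left (by omega)]
    omega
  have hbd : G.dist b d = k := by
    have h := dist_of_cycle_split hconn hegirth (M.append F') (R.append F)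
      (by simpa only [Walk.append_assoc] using hcycb)
      (by simp only [Walk.length_append]; omega)
      (by simp only [Walk.length_append]; omega)
      (by simp only [Walk.length_append]; omega)
    rw [h]
    simp only [Walk.length_append]
    rw [min_eq_left (by omega)]
    omega
  have hca : G.dist c a = k := by rwa [SimpleGraph.dist_comm]
  have hda : G.dist d a = g - k - 1 := by rwa [SimpleGraph.dist_comm]
  have hcb : G.dist c b = k - 1 := by rwa [SimpleGraph.dist_comm]
  have hdb : G.dist d b = k := by rwa [SimpleGraph.dist_comm]
  obtain ⟨x, x', y, y', hsym, hdist⟩ := geodesic_two_edges hconn hlen hne he hf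
  rcases hsym with ⟨hxe, hyf⟩ | ⟨hxe, hyf⟩ <;>
    rw [Sym2.eq_iff] at hxe hyf <;>
    rcases hxe with ⟨rfl, rfl⟩ | ⟨rfl, rfl⟩ <;> rcases hyf with ⟨rfl, rfl⟩ | ⟨rfl, rfl⟩ <;>
      omega

lemma coloring_of_pairs [Fintype V] [DecidableEq V] [DecidableRel G.Adj]
    (hconn : G.Connected) {e₀ e₁ r₀ r₁ : Sym2 V}
    (he₀ : e₀ ∈ G.edgeSet) (he₁ : e₁ ∈ G.edgeSet) (hr₀ : r₀ ∈ G.edgeSet) (hr₁ : r₁ ∈ G.edgeSet)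
    (hne00 : e₀ ≠ r₀) (hne01 : e₀ ≠ r₁) (hne10 : e₁ ≠ r₀) (hne11 : e₁ ≠ r₁) (hner : r₀ ≠ r₁)
    (hgeo₀ : ∀ {u v : V} (p : G.Walk u v), p.length = G.dist u v →
      e₀ ∈ p.edges → r₀ ∈ p.edges → False)
    (hgeo₁ : ∀ {u v : V} (p : G.Walk u v), p.length = G.dist u v →
      e₁ ∈ p.edges → r₁ ∈ p.edges → False)
    (hgeo₂ : e₀ = e₁ → ∀ {u v : V} (p : G.Walk u v), p.length = G.dist u v →
      r₀ ∈ p.edges → r₁ ∈ p.edges → False) :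
    ∃ n : ℕ, n + 2 ≤ G.edgeFinset.card ∧ ∃ c : Sym2 V → Fin n, ∀ u v : V, ∃ p : G.Walk u v,
      p.IsPath ∧ p.length = G.dist u v ∧ (p.edges.map c).Nodup := by
  set E' : Finset (Sym2 V) := G.edgeFinset \ {r₀, r₁} with hE'
  have hsub : ({r₀, r₁} : Finset (Sym2 V)) ⊆ G.edgeFinset := by
    intro x hx
    simp only [Finset.mem_insert, Finset.mem_singleton] at hx
    rcases hx with rfl | rfl <;> simpa [SimpleGraph.mem_edgeFinset]
  have hpair : ({r₀, r₁} : Finset (Sym2 V)).card = 2 := Finset.card_pair hner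
  have hcard : E'.card + 2 = G.edgeFinset.card := by
    have h2 : 2 ≤ G.edgeFinset.card := hpair ▸ Finset.card_le_card hsub
    rw [hE', Finset.card_sdiff_of_subset hsub, hpair]
    omega
  have he₀E : e₀ ∈ E' := by
    simp [hE', SimpleGraph.mem_edgeFinset, he₀, hne00, hne01]
  have he₁E : e₁ ∈ E' := by
    simp [hE', SimpleGraph.mem_edgeFinset, he₁, hne10, hne11]
  set β := E'.equivFin with hβ
  set c : Sym2 V → Fin E'.card := fun z =>
    if z = r₀ then β ⟨e₀, he₀E⟩ else if z = r₁ then β ⟨e₁, he₁E⟩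
    else if hz : z ∈ E' then β ⟨z, hz⟩ else β ⟨e₀, he₀E⟩ with hcdef
  have hc0 : c r₀ = β ⟨e₀, he₀E⟩ := by simp [hcdef]
  have hc1 : c r₁ = β ⟨e₁, he₁E⟩ := by simp [hcdef, hner.symm]
  have hcE : ∀ z (hzE' : z ∈ E'), c z = β ⟨z, hzE'⟩ := by
    intro z h
    have hz' : z ≠ r₀ ∧ z ≠ r₁ := by
      have := (Finset.mem_sdiff.mp h).2
      simp only [Finset.mem_insert, Finset.mem_singleton] at this
      tauto
    simp [hcdef, hz'.1, hz'.2, h]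
  refine ⟨E'.card, by omega, c, ?_⟩
  intro u v
  obtain ⟨p, hp, hlen⟩ := hconn.exists_path_of_dist u v
  refine ⟨p, hp, hlen, ?_⟩
  refine List.Nodup.map_on ?_ hp.isTrail.edges_nodup
  intro z hz w hw hzw
  have hzE : z ∈ G.edgeSet := p.edges_subset_edgeSet hz
  have hwE : w ∈ G.edgeSet := p.edges_subset_edgeSet hw
  have hzc : z = r₀ ∨ z = r₁ ∨ z ∈ E' := by
    by_cases h1 : z = r₀
    · exact Or.inl h1
    by_cases h2 : z = r₁
    · exact Or.inr (Or.inl h2)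
    exact Or.inr (Or.inr (by simp [hE', SimpleGraph.mem_edgeFinset, hzE, h1, h2]))
  have hwc : w = r₀ ∨ w = r₁ ∨ w ∈ E' := by
    by_cases h1 : w = r₀
    · exact Or.inl h1
    by_cases h2 : w = r₁
    · exact Or.inr (Or.inl h2)
    exact Or.inr (Or.inr (by simp [hE', SimpleGraph.mem_edgeFinset, hwE, h1, h2]))
  rcases hzc with rfl | rfl | hzE' <;> rcases hwc with rfl | rfl | hwE'
  · rfl
  · -- z = r₀, w = r₁
    rw [hc0, hc1] at hzw
    have heq : e₀ = e₁ := congrArg Subtype.val (β.injective hzw)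
    exact (hgeo₂ heq p hlen hz hw).elim
  · -- z = r₀, w ∈ E'
    rw [hc0, hcE w hwE'] at hzw
    have heq : e₀ = w := congrArg Subtype.val (β.injective hzw)
    exact (hgeo₀ p hlen (heq ▸ hw) hz).elim
  · -- z = r₁, w = r₀
    rw [hc1, hc0] at hzw
    have heq : e₁ = e₀ := congrArg Subtype.val (β.injective hzw)
    exact (hgeo₂ heq.symm p hlen hw hz).elim
  · rfl
  · -- z = r₁, w ∈ E'
    rw [hc1, hcE w hwE'] at hzw
    have heq : e₁ = w := congrArg Subtype.val (β.injective hzw)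
    exact (hgeo₁ p hlen (heq ▸ hw) hz).elim
  · -- z ∈ E', w = r₀
    rw [hcE z hzE', hc0] at hzw
    have heq : z = e₀ := congrArg Subtype.val (β.injective hzw)
    exact (hgeo₀ p hlen (heq ▸ hz) hw).elim
  · -- z ∈ E', w = r₁
    rw [hcE z hzE', hc1] at hzw
    have heq : z = e₁ := congrArg Subtype.val (β.injective hzw)
    exact (hgeo₁ p hlen (heq ▸ hz) hw).elim
  · rw [hcE z hzE', hcE w hwE'] at hzw
    exact congrArg Subtype.val (β.injective hzw)

lemma adj_dist_le_one {x y : V} (h : G.Adj x y) : G.dist x y ≤ 1 := by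
  simpa using SimpleGraph.dist_le (Walk.cons h Walk.nil)

lemma nontree_good [Fintype V] [DecidableEq V] [DecidableRel G.Adj]
    (hconn : G.Connected) (hnA : ¬ G.IsAcyclic) :
    ∃ n : ℕ, n + 2 ≤ G.edgeFinset.card ∧ ∃ c : Sym2 V → Fin n, ∀ u v : V, ∃ p : G.Walk u v,
      p.IsPath ∧ p.length = G.dist u v ∧ (p.edges.map c).Nodup := by
  obtain ⟨a, C, hC, hglen⟩ := SimpleGraph.exists_girth_eq_length.mpr hnA
  set g := G.girth with hg
  have hEg : G.egirth = (g : ℕ∞) := by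
    have h : G.egirth ≠ ⊤ := SimpleGraph.egirth_eq_top.not.mpr hnA
    exact (ENat.coe_toNat h).symm
  have hg3 : 3 ≤ g := SimpleGraph.three_le_girth hnA
  have hClen : C.length = g := hglen.symm
  have hnd : C.edges.Nodup := hC.isCircuit.isTrail.edges_nodup
  by_cases hg4 : 4 ≤ g
  · -- the general case
    obtain ⟨b, F0, R1, hs1, hF0⟩ := exists_split C 1 (by omega)
    have hR1 : R1.length = g - 1 := by
      have := congrArg Walk.length hs1; rw [Walk.length_append] at this; omega
    obtain ⟨b2, F1, R2, hs2, hF1⟩ := exists_split R1 1 (by omega)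
    have hR2 : R2.length = g - 2 := by
      have := congrArg Walk.length hs2; rw [Walk.length_append] at this; omega
    obtain ⟨cc, M', R3, hs3, hM'⟩ := exists_split R2 (g / 2 - 2) (by omega)
    have hR3 : R3.length = g - g / 2 := by
      have := congrArg Walk.length hs3; rw [Walk.length_append] at this; omega
    obtain ⟨dd, Fk, R4, hs4, hFk⟩ := exists_split R3 1 (by omega)
    have hR4 : R4.length = g - g / 2 - 1 := by
      have := congrArg Walk.length hs4; rw [Walk.length_append] at this; omega
    obtain ⟨d2, Fk1, R', hs5, hFk1⟩ := exists_split R4 1 (by omega)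
    have hR' : R'.length = g - g / 2 - 2 := by
      have := congrArg Walk.length hs5; rw [Walk.length_append] at this; omega
    obtain ⟨hab, habE⟩ := length_one_walk F0 hF0
    obtain ⟨hbb2, hbb2E⟩ := length_one_walk F1 hF1
    obtain ⟨hcd, hcdE⟩ := length_one_walk Fk hFk
    obtain ⟨hdd2, hdd2E⟩ := length_one_walk Fk1 hFk1
    have hCeq : C = F0.append (F1.append (M'.append (Fk.append (Fk1.append R')))) := by
      rw [hs1, hs2, hs3, hs4, hs5]
    have hCe : C.edges = s(a, b) :: s(b, b2) ::
        (M'.edges ++ (s(cc, dd) :: s(dd, d2) :: R'.edges)) := by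
      rw [hCeq]
      simp [Walk.edges_append, habE, hbb2E, hcdE, hdd2E]
    rw [hCe] at hnd
    have h_ab_notin := (List.nodup_cons.mp hnd).1
    have hnd2 := (List.nodup_cons.mp hnd).2
    have h_bb2_notin := (List.nodup_cons.mp hnd2).1
    have hnd3 := (List.nodup_cons.mp hnd2).2
    have hnd4 : (s(cc, dd) :: s(dd, d2) :: R'.edges).Nodup := (List.nodup_append.mp hnd3).2.1
    have h_cd_notin := (List.nodup_cons.mp hnd4).1
    have h01 : s(a, b) ≠ s(b, b2) := fun h => h_ab_notin (by rw [h]; simp)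
    have h00 : s(a, b) ≠ s(cc, dd) := fun h => h_ab_notin (by rw [h]; simp)
    have h0r1 : s(a, b) ≠ s(dd, d2) := fun h => h_ab_notin (by rw [h]; simp)
    have h1r0 : s(b, b2) ≠ s(cc, dd) := fun h => h_bb2_notin (by rw [h]; simp)
    have h11 : s(b, b2) ≠ s(dd, d2) := fun h => h_bb2_notin (by rw [h]; simp)
    have hr01 : s(cc, dd) ≠ s(dd, d2) := fun h => h_cd_notin (by rw [h]; simp)
    have hC' : (F0.append (F1.append (M'.append (Fk.append (Fk1.append R'))))).IsCycle :=
      hCeq ▸ hC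
    have hgeoA : ∀ {u v : V} (p : G.Walk u v), p.length = G.dist u v →
        s(a, b) ∈ p.edges → s(cc, dd) ∈ p.edges → False := by
      intro u v p hlen he hf
      exact no_geodesic_both hconn hEg hg4 F0 (F1.append M') Fk (Fk1.append R')
        (by simpa only [Walk.append_assoc] using hC')
        hF0 (by simp only [Walk.length_append]; omega) hFk
        (by simp only [Walk.length_append]; omega)
        h00 hlen he hf
    have hCrot := isCycle_append_comm hC'
    have hgeoB : ∀ {u v : V} (p : G.Walk u v), p.length = G.dist u v →
        s(b, b2) ∈ p.edges → s(dd, d2) ∈ p.edges → False := by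
      intro u v p hlen he hf
      exact no_geodesic_both hconn hEg hg4 F1 (M'.append Fk) Fk1 (R'.append F0)
        (by simpa only [Walk.append_assoc] using hCrot)
        hF1 (by simp only [Walk.length_append]; omega) hFk1
        (by simp only [Walk.length_append]; omega)
        h11 hlen he hf
    exact coloring_of_pairs hconn (G.mem_edgeSet.mpr hab) (G.mem_edgeSet.mpr hbb2)
      (G.mem_edgeSet.mpr hcd) (G.mem_edgeSet.mpr hdd2)
      h00 h0r1 h1r0 h11 hr01
      (fun p hl he hr => hgeoA p hl he hr)
      (fun p hl he hr => hgeoB p hl he hr)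
      (fun heq => absurd heq h01)
  · -- triangle case
    have hg3' : g = 3 := by omega
    obtain ⟨b, F0, R1, hs1, hF0⟩ := exists_split C 1 (by omega)
    have hR1 : R1.length = 2 := by
      have := congrArg Walk.length hs1; rw [Walk.length_append] at this; omega
    obtain ⟨cc, F1, F2, hs2, hF1⟩ := exists_split R1 1 (by omega)
    have hF2 : F2.length = 1 := by
      have := congrArg Walk.length hs2; rw [Walk.length_append] at this; omega
    obtain ⟨hab, habE⟩ := length_one_walk F0 hF0
    obtain ⟨hbc, hbcE⟩ := length_one_walk F1 hF1
    obtain ⟨hca, hcaE⟩ := length_one_walk F2 hF2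
    have hCe : C.edges = [s(a, b), s(b, cc), s(cc, a)] := by
      rw [hs1, hs2]
      simp [Walk.edges_append, habE, hbcE, hcaE]
    rw [hCe] at hnd
    have h1 : s(a, b) ≠ s(b, cc) := by intro h; simp [h] at hnd
    have h2 : s(a, b) ≠ s(cc, a) := by intro h; simp [h] at hnd
    have h3 : s(b, cc) ≠ s(cc, a) := by intro h; simp [h] at hnd
    have hd1 := adj_dist_le_one hab
    have hd2 := adj_dist_le_one hbc
    have hd3 := adj_dist_le_one hca
    have hd1' := adj_dist_le_one hab.symm
    have hd2' := adj_dist_le_one hbc.symm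
    have hd3' := adj_dist_le_one hca.symm
    have hds : ∀ x : V, G.dist x x ≤ 1 := fun x => by
      rw [SimpleGraph.dist_self]; omega
    exact coloring_of_pairs hconn (G.mem_edgeSet.mpr hab) (G.mem_edgeSet.mpr hab)
      (G.mem_edgeSet.mpr hbc) (G.mem_edgeSet.mpr hca)
      h1 h2 h1 h2 h3
      (fun {u v} p hl he hr => no_geo_close hconn h1 hd1 hd3' (hds b) hd2 hl he hr)
      (fun {u v} p hl he hr => no_geo_close hconn h2 hd3' (hds a) hd2 hd1' hl he hr)
      (fun _ {u v} p hl hr0 hr1 => no_geo_close hconn h3 hd2 hd1' (hds cc) hd3 hl hr0 hr1)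

lemma edge_mem_geodesic [DecidableEq V] (hT : G.IsTree)
    (hgeo : ∀ u v : V, ∃ p : G.Walk u v, p.IsPath ∧ p.length = G.dist u v)
    {x y x' : V} (p : G.Walk x y) (hp : p.IsPath) (hlen : p.length = G.dist x y)
    (hadj : G.Adj x x') (hmax : G.dist x' y ≤ G.dist x y) :
    s(x, x') ∈ p.edges := by
  by_cases hmem : x' ∈ p.support
  · have hq : (p.takeUntil x' hmem).IsPath := hp.takeUntil hmem
    have hsingle : (Walk.cons hadj Walk.nil : G.Walk x x').IsPath := by
      simp [Walk.cons_isPath_iff, hadj.ne]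
    have huniq := hT.IsAcyclic.path_unique ⟨p.takeUntil x' hmem, hq⟩
      ⟨Walk.cons hadj Walk.nil, hsingle⟩
    have heq : p.takeUntil x' hmem = Walk.cons hadj Walk.nil := congrArg Subtype.val huniq
    have hmem' : s(x, x') ∈ (p.takeUntil x' hmem).edges := by rw [heq]; simp
    exact Walk.edges_takeUntil_subset p hmem hmem'
  · exfalso
    have hW : (Walk.cons hadj.symm p).IsPath := (Walk.cons_isPath_iff _ _).mpr ⟨hp, hmem⟩
    obtain ⟨q, hqp, hqlen⟩ := hgeo x' y
    have huniq := hT.IsAcyclic.path_unique ⟨Walk.cons hadj.symm p, hW⟩ ⟨q, hqp⟩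
    have heq : Walk.cons hadj.symm p = q := congrArg Subtype.val huniq
    have hlq : (Walk.cons hadj.symm p).length = G.dist x' y := by rw [heq]; exact hqlen
    rw [Walk.length_cons] at hlq
    omega

lemma tree_card_le [Fintype V] [DecidableEq V] [DecidableRel G.Adj]
    (hT : G.IsTree) {n : ℕ} (c : Sym2 V → Fin n)
    (hc : ∀ u v : V, ∃ p : G.Walk u v, p.IsPath ∧ p.length = G.dist u v ∧
      (p.edges.map c).Nodup) :
    G.edgeFinset.card ≤ n := by
  have hgeo : ∀ u v : V, ∃ p : G.Walk u v, p.IsPath ∧ p.length = G.dist u v :=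
    fun u v => (hc u v).imp (fun p h => ⟨h.1, h.2.1⟩)
  have core : ∀ (u u' v v' : V), G.Adj u u' → G.Adj v v' →
      s(u, u') ≠ s(v, v') → G.dist u' v ≤ G.dist u v → G.dist u v' ≤ G.dist u v →
      c s(u, u') ≠ c s(v, v') := by
    intro u u' v v' huu' hvv' hne h1 h2
    obtain ⟨p, hp, hlen, hrain⟩ := hc u v
    have he : s(u, u') ∈ p.edges := edge_mem_geodesic hT hgeo p hp hlen huu' h1
    have hf : s(v, v') ∈ p.edges := by
      have h2' : G.dist v' u ≤ G.dist v u := by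
        rw [SimpleGraph.dist_comm, SimpleGraph.dist_comm (u := v)]
        exact h2
      have hrev := edge_mem_geodesic hT hgeo p.reverse hp.reverse
        (by rw [Walk.length_reverse, SimpleGraph.dist_comm]; exact hlen) hvv' h2'
      rwa [Walk.edges_reverse, List.mem_reverse] at hrev
    intro hcc
    exact hne (List.inj_on_of_nodup_map hrain he hf hcc)
  have key : ∀ (a b x y : V), G.Adj a b → G.Adj x y → s(a, b) ≠ s(x, y) →
      c s(a, b) ≠ c s(x, y) := by
    intro a b x y hab hxy hne
    have hsne : ({(a, x), (a, y), (b, x), (b, y)} : Finset (V × V)).Nonempty :=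
      ⟨(a, x), by simp⟩
    obtain ⟨q, hqmem, hmax⟩ :=
      Finset.exists_max_image ({(a, x), (a, y), (b, x), (b, y)} : Finset (V × V))
        (fun q => G.dist q.1 q.2) hsne
    simp only [Finset.mem_insert, Finset.mem_singleton] at hqmem
    rcases hqmem with rfl | rfl | rfl | rfl
    · exact core a b x y hab hxy hne
        (by simpa using hmax (b, x) (by simp)) (by simpa using hmax (a, y) (by simp))
    · have h := core a b y x hab hxy.symm
        (by rw [(Sym2.eq_swap : s(y, x) = s(x, y))]; exact hne)
        (by simpa using hmax (b, y) (by simp)) (by simpa using hmax (a, x) (by simp))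
      rwa [(Sym2.eq_swap : s(y, x) = s(x, y))] at h
    · have h := core b a x y hab.symm hxy
        (by rw [(Sym2.eq_swap : s(b, a) = s(a, b))]; exact hne)
        (by simpa using hmax (a, x) (by simp)) (by simpa using hmax (b, y) (by simp))
      rwa [(Sym2.eq_swap : s(b, a) = s(a, b))] at h
    · have h := core b a y x hab.symm hxy.symm
        (by rw [(Sym2.eq_swap : s(b, a) = s(a, b)), (Sym2.eq_swap : s(y, x) = s(x, y))]
            exact hne)
        (by simpa using hmax (a, y) (by simp)) (by simpa using hmax (b, x) (by simp))
      rwa [(Sym2.eq_swap : s(b, a) = s(a, b)), (Sym2.eq_swap : s(y, x) = s(x, y))] at h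
  have hinj : ∀ e ∈ G.edgeFinset, ∀ f ∈ G.edgeFinset, c e = c f → e = f := by
    intro e he f hf hef
    by_contra hne
    revert he hf hef hne
    refine Sym2.inductionOn₂ e f (fun a b x y => ?_)
    intro he hf hef hne
    have hab : G.Adj a b := G.mem_edgeSet.mp (SimpleGraph.mem_edgeFinset.mp he)
    have hxy : G.Adj x y := G.mem_edgeSet.mp (SimpleGraph.mem_edgeFinset.mp hf)
    exact key a b x y hab hxy hne hef
  calc G.edgeFinset.card ≤ (Finset.univ : Finset (Fin n)).card :=
        Finset.card_le_card_of_injOn c (fun e _ => Finset.mem_univ _) hinj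
    _ = n := by simp

end SRCAux

/-- `src G ≤ m - 2` iff `G` is not a tree (stated without truncated subtraction). -/
theorem stmt_8 {V : Type*} [Fintype V] [DecidableEq V] (G : SimpleGraph V)
    [DecidableRel G.Adj] (hG : G.Connected) :
    G.src + 2 ≤ G.edgeFinset.card ↔ ¬ G.IsTree := by
  classical
  have hSne : {n : ℕ | ∃ c : Sym2 V → Fin n, ∀ u v : V, ∃ p : G.Walk u v,
      p.IsPath ∧ p.length = G.dist u v ∧ (p.edges.map c).Nodup}.Nonempty := by
    refine ⟨Fintype.card (Sym2 V), Fintype.equivFin (Sym2 V), ?_⟩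
    intro u v
    obtain ⟨p, hp, hlen⟩ := hG.exists_path_of_dist u v
    exact ⟨p, hp, hlen, (hp.isTrail.edges_nodup).map (Equiv.injective _)⟩
  constructor
  · intro hle hT
    obtain ⟨c, hc⟩ := Nat.sInf_mem hSne
    have hcard := SRCAux.tree_card_le hT c hc
    have hsrc : G.src = sInf {n : ℕ | ∃ c : Sym2 V → Fin n, ∀ u v : V, ∃ p : G.Walk u v,
      p.IsPath ∧ p.length = G.dist u v ∧ (p.edges.map c).Nodup} := rfl
    rw [← hsrc] at hcard
    omega
  · intro hnT
    have hnA : ¬ G.IsAcyclic := fun hA => hnT ((SimpleGraph.isTree_iff G).mpr ⟨hG, hA⟩)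
    obtain ⟨n, hn2, c, hc⟩ := SRCAux.nontree_good hG hnA
    have hle : G.src ≤ n := Nat.sInf_le ⟨c, hc⟩
    omega
end

section
/- If G is a connected graph with m edges and src(G) ∈ {m−1, m−2}, then the girth of G satisfies 3 ≤ g(G) ≤ 5 (in particular G contains a cycle, and no cycle of G is a shortest cycle of length exceeding 5). -/
open SimpleGraph

set_option linter.unusedSectionVars false

namespace StrongRainbowAux

open SimpleGraph Walk

variable {V : Type*} [DecidableEq V] {G : SimpleGraph V}

/-- getVert agrees with support.get -/
lemma getVert_eq_support_get {u v : V} (p : G.Walk u v) (i : ℕ) (h : i < p.support.length) :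
    p.getVert i = p.support.get ⟨i, h⟩ := by
  induction p generalizing i with
  | nil =>
    simp only [Walk.support_nil, List.length_singleton] at h
    interval_cases i
    rfl
  | cons hadj q ih =>
    cases i with
    | zero => rfl
    | succ n =>
      show q.getVert n = _
      simp only [Walk.support_cons, List.get_cons_succ]
      exact ih n _

/-- a path visits distinct vertices -/
lemma path_getVert_inj {u v : V} {p : G.Walk u v} (hp : p.IsPath) {i j : ℕ}
    (hi : i ≤ p.length) (hj : j ≤ p.length) (h : p.getVert i = p.getVert j) : i = j := by
  have hi' : i < p.support.length := by rw [Walk.length_support]; omega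
  have hj' : j < p.support.length := by rw [Walk.length_support]; omega
  rw [getVert_eq_support_get p i hi', getVert_eq_support_get p j hj'] at h
  have := (Walk.isPath_def p).mp hp
  have := (List.Nodup.get_inj_iff this).mp h
  exact Fin.mk.inj_iff.mp this

/-- vertices of a cycle, except for the repeated base point, are distinct -/
lemma cycle_getVert_inj_aux {a : V} {w : G.Walk a a} (hw : w.IsCycle) {i j : ℕ}
    (hi1 : 1 ≤ i) (hi : i ≤ w.length) (hj1 : 1 ≤ j) (hj : j ≤ w.length)
    (h : w.getVert i = w.getVert j) : i = j := by
  have hnd : w.support.tail.Nodup := hw.2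
  have hlen : w.support.tail.length = w.length := by
    rw [List.length_tail, Walk.length_support]; omega
  have hi' : i - 1 < w.support.tail.length := by omega
  have hj' : j - 1 < w.support.tail.length := by omega
  have e1 : w.getVert i = w.support.tail.get ⟨i - 1, hi'⟩ := by
    rw [List.get_tail]
    rw [getVert_eq_support_get w i (by rw [Walk.length_support]; omega)]
    congr 1
    rw [Fin.mk.injEq]
    omega
  have e2 : w.getVert j = w.support.tail.get ⟨j - 1, hj'⟩ := by
    rw [List.get_tail]
    rw [getVert_eq_support_get w j (by rw [Walk.length_support]; omega)]
    congr 1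
    rw [Fin.mk.injEq]
    omega
  rw [e1, e2] at h
  have := (List.Nodup.get_inj_iff hnd).mp h
  have := Fin.mk.inj_iff.mp this
  omega

/-- vertices of a cycle, except for the repeated base point, are distinct -/
lemma cycle_getVert_inj {a : V} {w : G.Walk a a} (hw : w.IsCycle) {i j : ℕ}
    (hi : i < w.length) (hj : j < w.length) (h : w.getVert i = w.getVert j) : i = j := by
  rcases Nat.eq_zero_or_pos i with hi0 | hi1
  · rcases Nat.eq_zero_or_pos j with hj0 | hj1
    · omega
    · subst hi0
      have h' : w.getVert w.length = w.getVert j := by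
        rw [w.getVert_length]; exact (w.getVert_zero).symm.trans h
      have := cycle_getVert_inj_aux hw (by omega) (le_refl _) hj1 (by omega) h'
      omega
  · rcases Nat.eq_zero_or_pos j with hj0 | hj1
    · subst hj0
      have h' : w.getVert i = w.getVert w.length := by
        rw [w.getVert_length]; exact h.trans w.getVert_zero
      have := cycle_getVert_inj_aux hw hi1 (by omega) (by omega) (le_refl _) h'
      omega
    · exact cycle_getVert_inj_aux hw hi1 (by omega) hj1 (by omega) h

/-- i-th edge of a walk -/
lemma edges_get_eq {u v : V} (p : G.Walk u v) (i : ℕ) (h : i < p.edges.length) :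
    p.edges.get ⟨i, h⟩ = s(p.getVert i, p.getVert (i + 1)) := by
  induction p generalizing i with
  | nil => simp at h
  | cons hadj q ih =>
    cases i with
    | zero => simp [Walk.getVert_zero]
    | succ n =>
      simp only [Walk.edges_cons, List.get_cons_succ, Walk.getVert_cons_succ]
      exact ih n (by simp [Walk.length_edges] at h ⊢; omega)

lemma dist_getVert_le (hconn : G.Connected) {u v : V} (p : G.Walk u v) {s t : ℕ}
    (hst : s ≤ t) (ht : t ≤ p.length) : G.dist (p.getVert s) (p.getVert t) ≤ t - s := by
  induction t, hst using Nat.le_induction with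
  | base => simp
  | succ t hst ih =>
    have h1 : G.dist (p.getVert t) (p.getVert (t + 1)) ≤ 1 :=
      by
        have := SimpleGraph.dist_le (Walk.cons (p.adj_getVert_succ (show t < p.length by omega)) Walk.nil)
        simpa using this
    calc G.dist (p.getVert s) (p.getVert (t+1))
        ≤ G.dist (p.getVert s) (p.getVert t) + G.dist (p.getVert t) (p.getVert (t+1)) :=
          hconn.dist_triangle
      _ ≤ (t - s) + 1 := by have := ih (by omega); omega
      _ ≤ (t + 1) - s := by omega

/-- on a geodesic, distances are read off from indices -/
lemma geodesic_dist (hconn : G.Connected) {u v : V} (p : G.Walk u v)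
    (hp : p.length = G.dist u v) {s t : ℕ} (hst : s ≤ t) (ht : t ≤ p.length) :
    G.dist (p.getVert s) (p.getVert t) = t - s := by
  have h1 : G.dist (p.getVert s) (p.getVert t) ≤ t - s := dist_getVert_le hconn p hst ht
  have h2 : G.dist u (p.getVert s) ≤ s := by
    have := dist_getVert_le hconn p (Nat.zero_le s) (le_trans hst ht)
    simpa using this
  have h3 : G.dist (p.getVert t) v ≤ p.length - t := by
    have := dist_getVert_le hconn p ht (le_refl p.length)
    simpa [Walk.getVert_length] using this
  have h4 : G.dist u v ≤ G.dist u (p.getVert s) + G.dist (p.getVert s) (p.getVert t)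
      + G.dist (p.getVert t) v := by
    calc G.dist u v ≤ G.dist u (p.getVert t) + G.dist (p.getVert t) v := hconn.dist_triangle
      _ ≤ (G.dist u (p.getVert s) + G.dist (p.getVert s) (p.getVert t)) + G.dist (p.getVert t) v
        := by have := hconn.dist_triangle (u := u) (v := p.getVert s) (w := p.getVert t); omega
  omega

/-- an edge between the two endpoints of a path forces the path to be that edge -/
lemma path_length_one_of_ends_edge {u v : V} {p : G.Walk u v} (hp : p.IsPath)
    (h : s(u, v) ∈ p.edges) : p.length = 1 := by
  obtain ⟨⟨i, hi⟩, hget⟩ := List.mem_iff_get.mp h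
  rw [edges_get_eq p i hi] at hget
  have hil : i < p.length := by rwa [Walk.length_edges] at hi
  rcases Sym2.eq_iff.mp hget with ⟨h1, h2⟩ | ⟨h1, h2⟩
  · have e0 : p.getVert i = p.getVert 0 := by rw [Walk.getVert_zero]; exact h1
    have hi0 := path_getVert_inj hp (by omega) (by omega) e0
    have e1 : p.getVert (i + 1) = p.getVert p.length := by rw [Walk.getVert_length]; exact h2
    have := path_getVert_inj hp (by omega) (le_refl _) e1
    omega
  · have e0 : p.getVert i = p.getVert p.length := by rw [Walk.getVert_length]; exact h1
    have := path_getVert_inj hp (by omega) (le_refl _) e0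
    have e1 : p.getVert (i + 1) = p.getVert 0 := by rw [Walk.getVert_zero]; exact h2
    have := path_getVert_inj hp (by omega) (by omega) e1
    omega

/-- any cycle witnesses an upper bound on the extended girth -/
lemma egirth_le_cycle {a : V} (w : G.Walk a a) (hw : w.IsCycle) :
    G.egirth ≤ (w.length : ℕ∞) := by
  unfold SimpleGraph.egirth
  exact iInf_le_of_le a (iInf_le_of_le w (iInf_le _ hw))

/-- Two distinct paths between the same pair of vertices force a short cycle. -/
lemma egirth_le_of_two_paths : ∀ (n : ℕ) {u v : V} (p q : G.Walk u v),
    p.length + q.length ≤ n → p.IsPath → q.IsPath → p.edges ≠ q.edges →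
    G.egirth ≤ ((p.length + q.length : ℕ) : ℕ∞) := by
  intro n
  induction n with
  | zero =>
    intro u v p q hn hp hq hne
    exfalso
    apply hne
    have hp0 : p.edges.length = 0 := by rw [Walk.length_edges]; omega
    have hq0 : q.edges.length = 0 := by rw [Walk.length_edges]; omega
    rw [List.length_eq_zero_iff.mp hp0, List.length_eq_zero_iff.mp hq0]
  | succ n ih =>
    intro u v p q hn hp hq hne
    by_cases hshare : ∃ x, x ∈ p.support ∧ x ∈ q.support ∧ x ≠ u ∧ x ≠ v
    · obtain ⟨x, hxp, hxq, hxu, hxv⟩ := hshare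
      have hps := p.take_spec hxp
      have hqs := q.take_spec hxq
      have hp1 : (p.takeUntil x hxp).IsPath := hp.takeUntil _
      have hp2 : (p.dropUntil x hxp).IsPath := hp.dropUntil _
      have hq1 : (q.takeUntil x hxq).IsPath := hq.takeUntil _
      have hq2 : (q.dropUntil x hxq).IsPath := hq.dropUntil _
      have hlp : (p.takeUntil x hxp).length + (p.dropUntil x hxp).length = p.length := by
        conv_rhs => rw [← hps]
        rw [Walk.length_append]
      have hlq : (q.takeUntil x hxq).length + (q.dropUntil x hxq).length = q.length := by
        conv_rhs => rw [← hqs]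
        rw [Walk.length_append]
      have hep : (p.takeUntil x hxp).edges ++ (p.dropUntil x hxp).edges = p.edges := by
        conv_rhs => rw [← hps]
        rw [Walk.edges_append]
      have heq : (q.takeUntil x hxq).edges ++ (q.dropUntil x hxq).edges = q.edges := by
        conv_rhs => rw [← hqs]
        rw [Walk.edges_append]
      have hl1p : 1 ≤ (p.takeUntil x hxp).length := by
        rcases Nat.eq_zero_or_pos (p.takeUntil x hxp).length with h0 | h0
        · exact absurd (Walk.eq_of_length_eq_zero h0).symm hxu
        · exact h0
      have hl2p : 1 ≤ (p.dropUntil x hxp).length := by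
        rcases Nat.eq_zero_or_pos (p.dropUntil x hxp).length with h0 | h0
        · exact absurd (Walk.eq_of_length_eq_zero h0) hxv
        · exact h0
      have hl1q : 1 ≤ (q.takeUntil x hxq).length := by
        rcases Nat.eq_zero_or_pos (q.takeUntil x hxq).length with h0 | h0
        · exact absurd (Walk.eq_of_length_eq_zero h0).symm hxu
        · exact h0
      have hl2q : 1 ≤ (q.dropUntil x hxq).length := by
        rcases Nat.eq_zero_or_pos (q.dropUntil x hxq).length with h0 | h0
        · exact absurd (Walk.eq_of_length_eq_zero h0) hxv
        · exact h0
      by_cases he1 : (p.takeUntil x hxp).edges = (q.takeUntil x hxq).edges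
      · have he2 : (p.dropUntil x hxp).edges ≠ (q.dropUntil x hxq).edges := by
          intro h2
          exact hne (by rw [← hep, ← heq, he1, h2])
        have hle := ih (p.dropUntil x hxp) (q.dropUntil x hxq) (by omega) hp2 hq2 he2
        have hmono : (((p.dropUntil x hxp).length + (q.dropUntil x hxq).length : ℕ) : ℕ∞)
            ≤ ((p.length + q.length : ℕ) : ℕ∞) := by
          apply Nat.cast_le.mpr
          omega
        exact hle.trans hmono
      · have hle := ih (p.takeUntil x hxp) (q.takeUntil x hxq) (by omega) hp1 hq1 he1
        have hmono : (((p.takeUntil x hxp).length + (q.takeUntil x hxq).length : ℕ) : ℕ∞)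
            ≤ ((p.length + q.length : ℕ) : ℕ∞) := by
          apply Nat.cast_le.mpr
          omega
        exact hle.trans hmono
    · push_neg at hshare
      by_cases huv : u = v
      · subst huv
        exfalso
        rw [Walk.isPath_iff_eq_nil.mp hp, Walk.isPath_iff_eq_nil.mp hq] at hne
        exact hne rfl
      have hpl : 1 ≤ p.length := by
        rcases Nat.eq_zero_or_pos p.length with h0 | h0
        · exact absurd (Walk.eq_of_length_eq_zero h0) huv
        · exact h0
      have hql : 1 ≤ q.length := by
        rcases Nat.eq_zero_or_pos q.length with h0 | h0
        · exact absurd (Walk.eq_of_length_eq_zero h0) huv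
        · exact h0
      have hkey : ¬(s(u, v) ∈ p.edges ∧ s(u, v) ∈ q.edges) := by
        rintro ⟨he1, he2⟩
        have hp1 := path_length_one_of_ends_edge hp he1
        have hq1 := path_length_one_of_ends_edge hq he2
        apply hne
        obtain ⟨e1, hpe⟩ := List.length_eq_one_iff.mp (by rw [Walk.length_edges]; exact hp1)
        obtain ⟨e2, hqe⟩ := List.length_eq_one_iff.mp (by rw [Walk.length_edges]; exact hq1)
        rw [hpe] at he1 ⊢
        rw [hqe] at he2 ⊢
        rw [← List.mem_singleton.mp he1, ← List.mem_singleton.mp he2]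
      have hdisj : ∀ e, e ∈ p.edges → e ∈ q.edges → False := by
        intro e hpe hqe
        induction e with
        | h x y =>
          have hxp : x ∈ p.support := Walk.fst_mem_support_of_mem_edges p hpe
          have hyp : y ∈ p.support := Walk.snd_mem_support_of_mem_edges p hpe
          have hxq : x ∈ q.support := Walk.fst_mem_support_of_mem_edges q hqe
          have hyq : y ∈ q.support := Walk.snd_mem_support_of_mem_edges q hqe
          have hxy : x ≠ y := (p.adj_of_mem_edges hpe).ne
          have hx := hshare x hxp hxq
          have hy := hshare y hyp hyq
          by_cases hxu : x = u
          · have hyv : y = v := by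
              by_cases hyu : y = u
              · exact absurd (hyu.trans hxu.symm).symm hxy
              · exact hy (fun h => hyu h)
            subst hxu; subst hyv
            exact hkey ⟨hpe, hqe⟩
          · have hxv : x = v := hx (fun h => hxu h)
            have hyu : y = u := by
              by_cases hyv : y = v
              · exact absurd (hyv.trans hxv.symm).symm hxy
              · by_contra hyu
                exact hyv (hy (fun h => hyu h))
            subst hxv; subst hyu
            rw [Sym2.eq_swap] at hpe hqe
            exact hkey ⟨hpe, hqe⟩
      have hql1 : q.reverse.IsPath := hq.reverse
      have hccl : (p.append q.reverse).length = p.length + q.length := by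
        rw [Walk.length_append, Walk.length_reverse]
      have hcyc : (p.append q.reverse).IsCycle := by
        refine ⟨⟨⟨?_⟩, ?_⟩, ?_⟩
        · rw [Walk.edges_append, Walk.edges_reverse]
          refine List.Nodup.append hp.isTrail.edges_nodup
            (List.nodup_reverse.mpr hq.isTrail.edges_nodup) ?_
          intro e hep heq'
          exact hdisj e hep (List.mem_reverse.mp heq')
        · intro hnil
          have : (p.append q.reverse).length = 0 := by rw [hnil]; rfl
          omega
        · have htail : (p.append q.reverse).support.tail
              = p.support.tail ++ q.reverse.support.tail := by
            rw [Walk.support_append]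
            conv_lhs => rw [Walk.support_eq_cons p]
            rw [List.cons_append, List.tail_cons]
          rw [htail]
          refine List.Nodup.append (hp.support_nodup.tail) (hql1.support_nodup.tail) ?_
          intro z hzp hzq
          have hzp' : z ∈ p.support := List.mem_of_mem_tail hzp
          have hzq' : z ∈ q.support := by
            have := List.mem_of_mem_tail hzq
            rw [Walk.support_reverse, List.mem_reverse] at this
            exact this
          by_cases hzu : z = u
          · subst hzu
            have := Walk.support_eq_cons p
            have hnd := hp.support_nodup
            rw [this] at hnd
            exact (List.nodup_cons.mp hnd).1 hzp
          · have hzv : z = v := hshare z hzp' hzq' (fun h => hzu h)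
            subst hzv
            have := Walk.support_eq_cons q.reverse
            have hnd := hql1.support_nodup
            rw [this] at hnd
            exact (List.nodup_cons.mp hnd).1 hzq
      have := egirth_le_cycle (p.append q.reverse) hcyc
      rw [hccl] at this
      exact this

section CycleStuff

variable {a : V}

/-- the `i`-th vertex of a closed walk, indices taken mod the length -/
def cvtx (w : G.Walk a a) (i : ℕ) : V := w.getVert (i % w.length)

lemma cvtx_add_length (w : G.Walk a a) (i : ℕ) : cvtx w (i + w.length) = cvtx w i := by
  simp [cvtx, Nat.add_mod_right]

lemma cvtx_eq_getVert {w : G.Walk a a} {i : ℕ} (h : i < w.length) :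
    cvtx w i = w.getVert i := by
  simp [cvtx, Nat.mod_eq_of_lt h]

lemma cvtx_adj {w : G.Walk a a} (hpos : 0 < w.length) (i : ℕ) :
    G.Adj (cvtx w i) (cvtx w (i + 1)) := by
  have h1 : i % w.length < w.length := Nat.mod_lt _ hpos
  have hmod : (i + 1) % w.length = (i % w.length + 1) % w.length :=
    (Nat.mod_add_mod i w.length 1).symm
  unfold cvtx
  rw [hmod]
  by_cases h : i % w.length + 1 = w.length
  · rw [h, Nat.mod_self]
    have h2 := w.adj_getVert_succ (i := i % w.length) (by omega)
    rw [h, w.getVert_length] at h2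
    rw [w.getVert_zero]
    exact h2
  · have h3 : (i % w.length + 1) % w.length = i % w.length + 1 :=
      Nat.mod_eq_of_lt (by omega)
    rw [h3]
    exact w.adj_getVert_succ (by omega)

lemma cvtx_inj {w : G.Walk a a} (hw : w.IsCycle) {i j : ℕ} (h : cvtx w i = cvtx w j) :
    i % w.length = j % w.length := by
  have hpos : 0 < w.length := by have := hw.three_le_length; omega
  exact cycle_getVert_inj hw (Nat.mod_lt _ hpos) (Nat.mod_lt _ hpos) h

/-- the walk along the cycle from vertex `i` to vertex `i + n` -/
def arcW (w : G.Walk a a) (hpos : 0 < w.length) (i : ℕ) :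
    (n : ℕ) → G.Walk (cvtx w i) (cvtx w (i + n))
  | 0 => Walk.nil
  | n + 1 => (arcW w hpos i n).concat (cvtx_adj hpos (i + n))

@[simp] lemma arcW_length {w : G.Walk a a} (hpos : 0 < w.length) (i n : ℕ) :
    (arcW w hpos i n).length = n := by
  induction n with
  | zero => rfl
  | succ n ih =>
    show ((arcW w hpos i n).concat (cvtx_adj hpos (i + n))).length = n + 1
    rw [Walk.length_concat, ih]

lemma arcW_support {w : G.Walk a a} (hpos : 0 < w.length) (i n : ℕ) :
    (arcW w hpos i n).support = (List.range (n + 1)).map (fun t => cvtx w (i + t)) := by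
  induction n with
  | zero => rfl
  | succ n ih =>
    show ((arcW w hpos i n).concat (cvtx_adj hpos (i + n))).support = _
    rw [Walk.support_concat, ih, List.range_succ (n := n + 1),
      List.map_append]
    simp [Nat.add_assoc]

lemma arcW_isPath {w : G.Walk a a} (hw : w.IsCycle) (hpos : 0 < w.length) {i n : ℕ}
    (hn : n < w.length) : (arcW w hpos i n).IsPath := by
  rw [Walk.isPath_def, arcW_support]
  refine List.Nodup.map_on ?_ List.nodup_range
  intro t1 ht1 t2 ht2 h
  rw [List.mem_range] at ht1 ht2
  have := cvtx_inj hw h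
  have h1 : (i + t1) % w.length = (i + t2) % w.length := this
  have h2 : t1 % w.length = t2 % w.length := Nat.ModEq.add_left_cancel' i h1
  rwa [Nat.mod_eq_of_lt (by omega), Nat.mod_eq_of_lt (by omega)] at h2

/-- a shortest cycle is an isometric subgraph: distances along it are cycle distances -/
lemma cycle_dist (hconn : G.Connected) {w : G.Walk a a} (hw : w.IsCycle)
    (hmin : (w.length : ℕ∞) ≤ G.egirth) {d : ℕ} (hd : d ≤ w.length) (i : ℕ) :
    G.dist (cvtx w i) (cvtx w (i + d)) = min d (w.length - d) := by
  have hpos : 0 < w.length := by have := hw.three_le_length; omega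
  have hub1 : G.dist (cvtx w i) (cvtx w (i + d)) ≤ d := by
    have := SimpleGraph.dist_le (arcW w hpos i d)
    rwa [arcW_length] at this
  have hub2 : G.dist (cvtx w i) (cvtx w (i + d)) ≤ w.length - d := by
    have h := SimpleGraph.dist_le (arcW w hpos (i + d) (w.length - d))
    rw [arcW_length] at h
    have hcv : cvtx w (i + d + (w.length - d)) = cvtx w i := by
      have he : i + d + (w.length - d) = i + w.length := by omega
      rw [he, cvtx_add_length]
    rw [hcv] at h
    rwa [SimpleGraph.dist_comm] at h
  rcases Nat.eq_zero_or_pos (min d (w.length - d)) with h0 | hminpos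
  · omega
  by_contra hne
  have hlt : G.dist (cvtx w i) (cvtx w (i + d)) < min d (w.length - d) := by omega
  obtain ⟨P, hP, hPlen⟩ := hconn.exists_path_of_dist (cvtx w i) (cvtx w (i + d))
  rcases le_or_gt d (w.length - d) with hcase | hcase
  · -- use the forward arc, of length d
    have hQpath : (arcW w hpos i d).IsPath := arcW_isPath hw hpos (by omega)
    have hedne : P.edges ≠ (arcW w hpos i d).edges := by
      intro h
      have := congrArg List.length h
      rw [Walk.length_edges, Walk.length_edges, arcW_length] at this
      omega
    have hA := egirth_le_of_two_paths (P.length + (arcW w hpos i d).length) P _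
      le_rfl hP hQpath hedne
    have hc : ((P.length + (arcW w hpos i d).length : ℕ) : ℕ∞) < (w.length : ℕ∞) := by
      rw [arcW_length]
      apply Nat.cast_lt.mpr
      omega
    exact absurd (hmin.trans hA) (not_le.mpr hc)
  · -- use the backward arc, of length w.length - d
    have hcv : cvtx w (i + d + (w.length - d)) = cvtx w i := by
      have he : i + d + (w.length - d) = i + w.length := by omega
      rw [he, cvtx_add_length]
    set Q := ((arcW w hpos (i + d) (w.length - d)).copy rfl hcv).reverse with hQdef
    have hQpath : Q.IsPath := by
      apply Walk.IsPath.reverse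
      rw [Walk.isPath_copy]
      exact arcW_isPath hw hpos (by omega)
    have hQlen : Q.length = w.length - d := by
      rw [hQdef, Walk.length_reverse, Walk.length_copy, arcW_length]
    have hedne : P.edges ≠ Q.edges := by
      intro h
      have := congrArg List.length h
      rw [Walk.length_edges, Walk.length_edges, hQlen] at this
      omega
    have hA := egirth_le_of_two_paths (P.length + Q.length) P Q le_rfl hP hQpath hedne
    have hc : ((P.length + Q.length : ℕ) : ℕ∞) < (w.length : ℕ∞) := by
      rw [hQlen]
      apply Nat.cast_lt.mpr
      omega
    exact absurd (hmin.trans hA) (not_le.mpr hc)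

/-- two distinct edges on a geodesic give a distance identity -/
lemma geodesic_two_edges (hconn : G.Connected) {u v : V} (p : G.Walk u v)
    (hp : p.length = G.dist u v) {e1 e2 : Sym2 V} (h1 : e1 ∈ p.edges) (h2 : e2 ∈ p.edges)
    (hne : e1 ≠ e2) :
    ∃ x y z w', ((e1 = s(x, y) ∧ e2 = s(z, w')) ∨ (e2 = s(x, y) ∧ e1 = s(z, w'))) ∧
      G.dist x w' = G.dist y z + 2 := by
  obtain ⟨⟨i, hi⟩, hg1⟩ := List.mem_iff_get.mp h1
  obtain ⟨⟨j, hj⟩, hg2⟩ := List.mem_iff_get.mp h2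
  rw [edges_get_eq p i hi] at hg1
  rw [edges_get_eq p j hj] at hg2
  have hil : i < p.length := by rwa [Walk.length_edges] at hi
  have hjl : j < p.length := by rwa [Walk.length_edges] at hj
  have hij : i ≠ j := by
    intro h
    subst h
    exact hne (hg1.symm.trans hg2)
  rcases Nat.lt_or_ge i j with hlt | hge
  · refine ⟨p.getVert i, p.getVert (i + 1), p.getVert j, p.getVert (j + 1),
      Or.inl ⟨hg1.symm, hg2.symm⟩, ?_⟩
    rw [geodesic_dist hconn p hp (show i ≤ j + 1 by omega) (by omega),
      geodesic_dist hconn p hp (show i + 1 ≤ j by omega) (by omega)]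
    omega
  · have hlt : j < i := by omega
    refine ⟨p.getVert j, p.getVert (j + 1), p.getVert i, p.getVert (i + 1),
      Or.inr ⟨hg2.symm, hg1.symm⟩, ?_⟩
    rw [geodesic_dist hconn p hp (show j ≤ i + 1 by omega) (by omega),
      geodesic_dist hconn p hp (show j + 1 ≤ i by omega) (by omega)]
    omega

lemma cycle_edge_inj {w : G.Walk a a} (hw : w.IsCycle) {i j : ℕ} (hi : i < w.length)
    (hj : j < w.length) (h : s(cvtx w i, cvtx w (i + 1)) = s(cvtx w j, cvtx w (j + 1))) :
    i = j := by
  have h3 := hw.three_le_length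
  rcases Sym2.eq_iff.mp h with ⟨h1, h2⟩ | ⟨h1, h2⟩
  · have := cvtx_inj hw h1
    rwa [Nat.mod_eq_of_lt hi, Nat.mod_eq_of_lt hj] at this
  · exfalso
    have e1 := cvtx_inj hw h1
    have e2 := cvtx_inj hw h2
    rw [Nat.mod_eq_of_lt hi] at e1
    rw [Nat.mod_eq_of_lt hj] at e2
    by_cases hj1 : j + 1 = w.length
    · rw [hj1, Nat.mod_self] at e1
      by_cases hi1 : i + 1 = w.length
      · omega
      · rw [Nat.mod_eq_of_lt (by omega)] at e2
        omega
    · rw [Nat.mod_eq_of_lt (by omega)] at e1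
      by_cases hi1 : i + 1 = w.length
      · rw [hi1, Nat.mod_self] at e2
        omega
      · rw [Nat.mod_eq_of_lt (by omega)] at e2
        omega

end CycleStuff

section Tree

lemma tree_first_edge (hconn : G.Connected) (hac : G.IsAcyclic) {x x' y : V}
    (hadj : G.Adj x x') (hle : G.dist x' y ≤ G.dist x y) {p : G.Walk x y} (hp : p.IsPath) :
    s(x, x') ∈ p.edges := by
  obtain ⟨P, hP, hPlen⟩ := hconn.exists_path_of_dist x' y
  by_cases hx : x ∈ P.support
  · exfalso
    have h1 : (P.takeUntil x hx).IsPath := hP.takeUntil _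
    have hedge : ((Walk.cons hadj.symm Walk.nil) : G.Walk x' x).IsPath := by
      simp [Walk.isPath_def, hadj.ne']
    have hEq : P.takeUntil x hx = Walk.cons hadj.symm Walk.nil := by
      have := hac.path_unique ⟨P.takeUntil x hx, h1⟩ ⟨Walk.cons hadj.symm Walk.nil, hedge⟩
      exact congrArg Subtype.val this
    have hl1 : (P.takeUntil x hx).length = 1 := by rw [hEq]; rfl
    have hl2 : G.dist x y ≤ (P.dropUntil x hx).length := SimpleGraph.dist_le _
    have hsum : (P.takeUntil x hx).length + (P.dropUntil x hx).length = P.length := by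
      conv_rhs => rw [← P.take_spec hx]
      rw [Walk.length_append]
    omega
  · have hW : (Walk.cons hadj P).IsPath := hP.cons hx
    have := hac.path_unique ⟨p, hp⟩ ⟨Walk.cons hadj P, hW⟩
    have hpe : p = Walk.cons hadj P := congrArg Subtype.val this
    rw [hpe, Walk.edges_cons]
    exact List.mem_cons_self

lemma tree_core {n : ℕ} {c : Sym2 V → Fin n} (hconn : G.Connected) (hac : G.IsAcyclic)
    {x x' y y' : V} (h1 : G.Adj x x') (h2 : G.Adj y y')
    (hle1 : G.dist x' y ≤ G.dist x y) (hle2 : G.dist x y' ≤ G.dist x y)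
    (hne : s(x, x') ≠ s(y, y')) (hcc : c s(x, x') = c s(y, y'))
    (hc : ∀ u v : V, ∃ p : G.Walk u v,
      p.IsPath ∧ p.length = G.dist u v ∧ (p.edges.map c).Nodup) : False := by
  obtain ⟨p, hp, hplen, hnd⟩ := hc x y
  have he1 : s(x, x') ∈ p.edges := tree_first_edge hconn hac h1 hle1 hp
  have he2 : s(y, y') ∈ p.edges := by
    have hle2' : G.dist y' x ≤ G.dist y x := by
      rw [SimpleGraph.dist_comm, SimpleGraph.dist_comm (u := y)]
      exact hle2
    have := tree_first_edge hconn hac h2 hle2' hp.reverse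
    rwa [Walk.edges_reverse, List.mem_reverse] at this
  exact hne (List.inj_on_of_nodup_map hnd he1 he2 hcc)

lemma tree_card_le [Fintype V] [DecidableRel G.Adj] (hconn : G.Connected) (hac : G.IsAcyclic)
    {n : ℕ} (c : Sym2 V → Fin n)
    (hc : ∀ u v : V, ∃ p : G.Walk u v,
      p.IsPath ∧ p.length = G.dist u v ∧ (p.edges.map c).Nodup) :
    G.edgeFinset.card ≤ n := by
  by_contra hlt
  push_neg at hlt
  obtain ⟨e, he, f, hf, hef, hcef⟩ := Finset.exists_ne_map_eq_of_card_lt_of_maps_to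
    (t := (Finset.univ : Finset (Fin n))) (by simpa using hlt)
    (fun e _ => Finset.mem_univ (c e))
  induction e using Sym2.ind with
  | _ a b =>
  induction f using Sym2.ind with
  | _ a2 b2 =>
  have ha : G.Adj a b := by simpa using he
  have hb : G.Adj a2 b2 := by simpa using hf
  obtain ⟨⟨x, y⟩, hxy, hmax⟩ := Finset.exists_max_image
    ({(a, a2), (a, b2), (b, a2), (b, b2)} : Finset (V × V))
    (fun pr => G.dist pr.1 pr.2) (by simp)
  simp only [Finset.mem_insert, Finset.mem_singleton, Prod.mk.injEq] at hxy
  have hmax' : ∀ x' y', (x', y') ∈ ({(a, a2), (a, b2), (b, a2), (b, b2)} : Finset (V × V)) →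
      G.dist x' y' ≤ G.dist x y := by
    intro x' y' hm
    exact hmax (x', y') hm
  rcases hxy with ⟨rfl, rfl⟩ | ⟨rfl, rfl⟩ | ⟨rfl, rfl⟩ | ⟨rfl, rfl⟩
  · -- e = s(x, b), f = s(y, b2)
    exact tree_core hconn hac ha hb
      (hmax' b y (by simp)) (hmax' x b2 (by simp)) hef hcef hc
  · -- e = s(x, b), f = s(a2, y)
    exact tree_core hconn hac ha hb.symm
      (hmax' b y (by simp)) (hmax' x a2 (by simp))
      (fun hcon => hef (hcon.trans Sym2.eq_swap))
      (hcef.trans (congrArg c Sym2.eq_swap)) hc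
  · -- e = s(a, x), f = s(y, b2)
    exact tree_core hconn hac ha.symm hb
      (hmax' a y (by simp)) (hmax' x b2 (by simp))
      (fun hcon => hef (Sym2.eq_swap.trans hcon))
      (((congrArg c Sym2.eq_swap).symm).trans hcef) hc
  · -- e = s(a, x), f = s(a2, y)
    exact tree_core hconn hac ha.symm hb.symm
      (hmax' a y (by simp)) (hmax' x a2 (by simp))
      (fun hcon => hef ((Sym2.eq_swap.trans hcon).trans Sym2.eq_swap))
      (((congrArg c Sym2.eq_swap).symm).trans (hcef.trans (congrArg c Sym2.eq_swap))) hc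

end Tree

section Pack

lemma pack [Fintype V] [DecidableRel G.Adj] {n : ℕ} (hn : 0 < n) (c' : Sym2 V → ℕ)
    (him : (G.edgeFinset.image c').card ≤ n)
    (hc : ∀ u v : V, ∃ p : G.Walk u v,
      p.IsPath ∧ p.length = G.dist u v ∧ (p.edges.map c').Nodup) :
    ∃ c : Sym2 V → Fin n, ∀ u v : V, ∃ p : G.Walk u v,
      p.IsPath ∧ p.length = G.dist u v ∧ (p.edges.map c).Nodup := by
  classical
  have hcard : Fintype.card {x // x ∈ G.edgeFinset.image c'} ≤ Fintype.card (Fin n) := by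
    rw [Fintype.card_coe, Fintype.card_fin]
    exact him
  obtain ⟨emb⟩ := Function.Embedding.nonempty_of_card_le hcard
  refine ⟨fun e => if h : c' e ∈ G.edgeFinset.image c' then emb ⟨c' e, h⟩ else ⟨0, hn⟩,
    fun u v => ?_⟩
  obtain ⟨p, hp, hlen, hnd⟩ := hc u v
  refine ⟨p, hp, hlen, ?_⟩
  have hrw : p.edges.map (fun e => if h : c' e ∈ G.edgeFinset.image c' then emb ⟨c' e, h⟩
      else (⟨0, hn⟩ : Fin n))
      = (p.edges.map c').map (fun m => if h : m ∈ G.edgeFinset.image c' then emb ⟨m, h⟩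
      else (⟨0, hn⟩ : Fin n)) := by
    rw [List.map_map]
    rfl
  rw [hrw]
  refine List.Nodup.map_on ?_ hnd
  intro m1 hm1 m2 hm2 hg
  have hmem : ∀ m ∈ p.edges.map c', m ∈ G.edgeFinset.image c' := by
    intro m hm
    obtain ⟨e, hee, rfl⟩ := List.mem_map.mp hm
    exact Finset.mem_image_of_mem c'
      (by rw [SimpleGraph.mem_edgeFinset]; exact p.edges_subset_edgeSet hee)
  have hm1' := hmem m1 hm1
  have hm2' := hmem m2 hm2
  rw [dif_pos hm1', dif_pos hm2'] at hg
  have := emb.injective hg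
  exact congrArg Subtype.val this

lemma srcSet_nonempty [Fintype V] [DecidableRel G.Adj] (hconn : G.Connected) :
    ∃ c : Sym2 V → Fin (G.edgeFinset.card + 1), ∀ u v : V, ∃ p : G.Walk u v,
      p.IsPath ∧ p.length = G.dist u v ∧ (p.edges.map c).Nodup := by
  classical
  set c' : Sym2 V → ℕ := fun e => ((Fintype.equivFin (Sym2 V)) e : ℕ) with hc'
  have hinj : Function.Injective c' := by
    intro e1 e2 h
    have := Fin.val_injective h
    exact (Fintype.equivFin (Sym2 V)).injective this
  refine pack (by omega) c' ?_ ?_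
  · calc (G.edgeFinset.image c').card ≤ G.edgeFinset.card := Finset.card_image_le
      _ ≤ G.edgeFinset.card + 1 := by omega
  · intro u v
    obtain ⟨p, hp, hlen⟩ := hconn.exists_path_of_dist u v
    exact ⟨p, hp, hlen, (hp.isTrail.edges_nodup).map hinj⟩

/-- with a shortest cycle of length at least 6, three pairs of its edges may share colors -/
lemma rainbow_mod3 [Fintype V] [DecidableRel G.Adj] (hconn : G.Connected) {a : V}
    {w : G.Walk a a} (hw : w.IsCycle) (hmin : (w.length : ℕ∞) ≤ G.egirth)
    (hg6 : 6 ≤ w.length) :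
    ∃ c' : Sym2 V → ℕ, (G.edgeFinset.image c').card ≤ G.edgeFinset.card - 3 ∧
      ∀ u v : V, ∃ p : G.Walk u v,
        p.IsPath ∧ p.length = G.dist u v ∧ (p.edges.map c').Nodup := by
  classical
  have hpos : 0 < w.length := by omega
  set L := w.length with hL
  set k := L / 2 with hk
  have hk3 : 3 ≤ k := by omega
  have hkL : k + 3 ≤ L := by omega
  have h2k : 2 * k ≤ L := by omega
  have h2k1 : L ≤ 2 * k + 1 := by omega
  set E : ℕ → Sym2 V := fun i => s(cvtx w i, cvtx w (i + 1)) with hE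
  have hEmem : ∀ i, E i ∈ G.edgeFinset := by
    intro i
    rw [hE]
    simp only [SimpleGraph.mem_edgeFinset, SimpleGraph.mem_edgeSet]
    exact cvtx_adj hpos i
  have hEinj : ∀ i j, i < L → j < L → E i = E j → i = j := by
    intro i j hi hj hij
    exact cycle_edge_inj hw hi hj hij
  -- the recoloring map
  set F : Sym2 V → Sym2 V := fun e =>
    if e = E k then E 0 else if e = E (k + 1) then E 1 else if e = E (k + 2) then E 2 else e
    with hF
  set enum : Sym2 V → ℕ := fun e => ((Fintype.equivFin (Sym2 V)) e : ℕ) with henum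
  have henuminj : Function.Injective enum := by
    intro e1 e2 h
    have := Fin.val_injective h
    exact (Fintype.equivFin (Sym2 V)).injective this
  refine ⟨fun e => enum (F e), ?_, ?_⟩
  · -- cardinality of the image
    have himsub : G.edgeFinset.image F ⊆
        G.edgeFinset \ ({E k, E (k + 1), E (k + 2)} : Finset (Sym2 V)) := by
      intro e' he'
      obtain ⟨e, he, rfl⟩ := Finset.mem_image.mp he'
      rw [Finset.mem_sdiff]
      constructor
      · rw [hF]
        dsimp only
        split_ifs with h1 h2 h3
        · exact hEmem 0
        · exact hEmem 1
        · exact hEmem 2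
        · exact he
      · rw [hF]
        dsimp only
        have hne : ∀ s t : ℕ, s ≤ 2 → t ≤ 2 → E s ≠ E (k + t) := by
          intro s t hs ht
          intro hcon
          have := hEinj s (k + t) (by omega) (by omega) hcon
          omega
        split_ifs with h1 h2 h3
        · simp only [Finset.mem_insert, Finset.mem_singleton]
          push_neg
          exact ⟨hne 0 0 (by omega) (by omega), hne 0 1 (by omega) (by omega),
            hne 0 2 (by omega) (by omega)⟩
        · simp only [Finset.mem_insert, Finset.mem_singleton]
          push_neg
          exact ⟨hne 1 0 (by omega) (by omega), hne 1 1 (by omega) (by omega),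
            hne 1 2 (by omega) (by omega)⟩
        · simp only [Finset.mem_insert, Finset.mem_singleton]
          push_neg
          exact ⟨hne 2 0 (by omega) (by omega), hne 2 1 (by omega) (by omega),
            hne 2 2 (by omega) (by omega)⟩
        · simp only [Finset.mem_insert, Finset.mem_singleton]
          push_neg
          exact ⟨h1, h2, h3⟩
    have h3sub : ({E k, E (k + 1), E (k + 2)} : Finset (Sym2 V)) ⊆ G.edgeFinset := by
      intro e' he'
      simp only [Finset.mem_insert, Finset.mem_singleton] at he'
      rcases he' with rfl | rfl | rfl <;> exact hEmem _
    have h3card : ({E k, E (k + 1), E (k + 2)} : Finset (Sym2 V)).card = 3 := by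
      rw [Finset.card_insert_of_notMem, Finset.card_insert_of_notMem,
        Finset.card_singleton]
      · simp only [Finset.mem_singleton]
        intro hcon
        have := hEinj (k + 1) (k + 2) (by omega) (by omega) hcon
        omega
      · simp only [Finset.mem_insert, Finset.mem_singleton]
        push_neg
        constructor
        · intro hcon
          have := hEinj k (k + 1) (by omega) (by omega) hcon
          omega
        · intro hcon
          have := hEinj k (k + 2) (by omega) (by omega) hcon
          omega
    calc (G.edgeFinset.image fun e => enum (F e)).card
        ≤ (G.edgeFinset.image F).card := by
          rw [show (G.edgeFinset.image fun e => enum (F e)) = (G.edgeFinset.image F).image enum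
            from by rw [Finset.image_image]; rfl]
          exact Finset.card_image_le
      _ ≤ (G.edgeFinset \ ({E k, E (k + 1), E (k + 2)} : Finset (Sym2 V))).card :=
          Finset.card_le_card himsub
      _ = G.edgeFinset.card - 3 := by rw [Finset.card_sdiff_of_subset h3sub, h3card]
  · -- the rainbow property
    intro u v
    obtain ⟨p, hp, hplen⟩ := hconn.exists_path_of_dist u v
    refine ⟨p, hp, hplen, ?_⟩
    have hrw : p.edges.map (fun e => enum (F e)) = (p.edges.map F).map enum := by
      rw [List.map_map]
      rfl
    rw [hrw]
    refine List.Nodup.map henuminj ?_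
    refine List.Nodup.map_on ?_ hp.isTrail.edges_nodup
    intro e1 he1 e2 he2 hFe
    by_contra hne12
    -- from the clash, some pair E t, E (t + k) both lie on the geodesic p
    have hcases : ∀ e, (F e = e ∧ ∀ s, s ≤ 2 → e ≠ E (k + s)) ∨
        (∃ s, s ≤ 2 ∧ e = E (k + s) ∧ F e = E s) := by
      intro e
      rw [hF]
      dsimp only
      by_cases h1 : e = E k
      · right
        exact ⟨0, by omega, h1, by rw [if_pos h1]⟩
      · by_cases h2 : e = E (k + 1)
        · right
          exact ⟨1, by omega, h2, by rw [if_neg h1, if_pos h2]⟩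
        · by_cases h3 : e = E (k + 2)
          · right
            exact ⟨2, by omega, h3, by rw [if_neg h1, if_neg h2, if_pos h3]⟩
          · left
            refine ⟨by rw [if_neg h1, if_neg h2, if_neg h3], ?_⟩
            intro s hs
            interval_cases s
            · exact h1
            · exact h2
            · exact h3
    have key : ∃ t, t ≤ 2 ∧ E t ∈ p.edges ∧ E (t + k) ∈ p.edges := by
      rcases hcases e1 with ⟨hf1, hn1⟩ | ⟨s1, hs1, he1', hf1⟩ <;>
        rcases hcases e2 with ⟨hf2, hn2⟩ | ⟨s2, hs2, he2', hf2⟩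
      · rw [hf1, hf2] at hFe
        exact absurd hFe hne12
      · rw [hf1, hf2] at hFe
        refine ⟨s2, hs2, ?_, ?_⟩
        · rw [← hFe]
          exact he1
        · rw [Nat.add_comm, ← he2']
          exact he2
      · rw [hf1, hf2] at hFe
        refine ⟨s1, hs1, ?_, ?_⟩
        · rw [hFe]
          exact he2
        · rw [Nat.add_comm, ← he1']
          exact he1
      · rw [hf1, hf2] at hFe
        have hss : s1 = s2 := hEinj s1 s2 (by omega) (by omega) hFe
        subst hss
        rw [← he2'] at he1'
        exact absurd he1' hne12
    obtain ⟨t, ht2, hEt, hEtk⟩ := key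
    have hEne : E t ≠ E (t + k) := by
      intro hcon
      have := hEinj t (t + k) (by omega) (by omega) hcon
      omega
    -- distance facts on the cycle
    have d1 : G.dist (cvtx w t) (cvtx w (t + k)) = k := by
      have hd := cycle_dist hconn hw hmin (d := k) (by omega) t
      rwa [Nat.min_eq_left (by omega)] at hd
    have d2 : G.dist (cvtx w (t + 1)) (cvtx w (t + k + 1)) = k := by
      have hd := cycle_dist hconn hw hmin (d := k) (by omega) (t + 1)
      rw [Nat.min_eq_left (by omega)] at hd
      rwa [show t + 1 + k = t + k + 1 from by omega] at hd
    have d3 : G.dist (cvtx w (t + 1)) (cvtx w (t + k)) = k - 1 := by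
      have hd := cycle_dist hconn hw hmin (d := k - 1) (by omega) (t + 1)
      rw [Nat.min_eq_left (by omega)] at hd
      rwa [show t + 1 + (k - 1) = t + k from by omega] at hd
    have d4 := cycle_dist hconn hw hmin (d := k + 1) (by omega) t
    have d4a : G.dist (cvtx w t) (cvtx w (t + (k + 1))) ≤ L - (k + 1) := by
      rw [d4]; exact Nat.min_le_right _ _
    have d4b : k - 1 ≤ G.dist (cvtx w t) (cvtx w (t + (k + 1))) := by
      rw [d4]; exact Nat.le_min.mpr ⟨by omega, by omega⟩
    have hshift : t + (k + 1) = t + k + 1 := by omega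
    rw [hshift] at d4a d4b
    have c1 : G.dist (cvtx w (t + k)) (cvtx w t) = k := by
      rw [SimpleGraph.dist_comm]; exact d1
    have c2 : G.dist (cvtx w (t + k + 1)) (cvtx w (t + 1)) = k := by
      rw [SimpleGraph.dist_comm]; exact d2
    have c3 : G.dist (cvtx w (t + k)) (cvtx w (t + 1)) = k - 1 := by
      rw [SimpleGraph.dist_comm]; exact d3
    have c4 : G.dist (cvtx w (t + k + 1)) (cvtx w t)
        = G.dist (cvtx w t) (cvtx w (t + k + 1)) := SimpleGraph.dist_comm
    -- geodesic identity
    obtain ⟨x, y, z, w', hor, heq⟩ := geodesic_two_edges hconn p hplen hEt hEtk hEne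
    have hEt' : E t = s(cvtx w t, cvtx w (t + 1)) := rfl
    have hEtk' : E (t + k) = s(cvtx w (t + k), cvtx w (t + k + 1)) := rfl
    rcases hor with ⟨hxy, hzw⟩ | ⟨hxy, hzw⟩
    · rw [hEt'] at hxy
      rw [hEtk'] at hzw
      rcases Sym2.eq_iff.mp hxy with ⟨rfl, rfl⟩ | ⟨rfl, rfl⟩ <;>
        rcases Sym2.eq_iff.mp hzw with ⟨rfl, rfl⟩ | ⟨rfl, rfl⟩ <;> omega
    · rw [hEtk'] at hxy
      rw [hEt'] at hzw
      rcases Sym2.eq_iff.mp hxy with ⟨rfl, rfl⟩ | ⟨rfl, rfl⟩ <;>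
        rcases Sym2.eq_iff.mp hzw with ⟨rfl, rfl⟩ | ⟨rfl, rfl⟩ <;> omega

end Pack

end StrongRainbowAux

/-- If `src G ∈ {m-1, m-2}` then `3 ≤ girth G ≤ 5`. -/
theorem stmt_9 {V : Type*} [Fintype V] [DecidableEq V] (G : SimpleGraph V)
    [DecidableRel G.Adj] (hG : G.Connected)
    (h : G.src + 1 = G.edgeFinset.card ∨ G.src + 2 = G.edgeFinset.card) :
    3 ≤ G.girth ∧ G.girth ≤ 5 := by
  classical
  have hSne : ∃ n, n ∈ {n : ℕ | ∃ c : Sym2 V → Fin n, ∀ u v : V, ∃ p : G.Walk u v,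
      p.IsPath ∧ p.length = G.dist u v ∧ (p.edges.map c).Nodup} :=
    ⟨_, StrongRainbowAux.srcSet_nonempty hG⟩
  have hsrcS : ∃ c : Sym2 V → Fin G.src, ∀ u v : V, ∃ p : G.Walk u v,
      p.IsPath ∧ p.length = G.dist u v ∧ (p.edges.map c).Nodup := Nat.sInf_mem hSne
  have hnac : ¬ G.IsAcyclic := by
    intro hac
    obtain ⟨c, hc⟩ := hsrcS
    have hm := StrongRainbowAux.tree_card_le hG hac c hc
    omega
  refine ⟨SimpleGraph.three_le_girth hnac, ?_⟩
  by_contra h5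
  push_neg at h5
  obtain ⟨a, w, hw, hglen⟩ := SimpleGraph.exists_girth_eq_length.mpr hnac
  have hg6 : 6 ≤ w.length := by omega
  have hnet : G.egirth ≠ ⊤ := by
    rw [Ne, SimpleGraph.egirth_eq_top]
    exact hnac
  have hemin : (w.length : ℕ∞) ≤ G.egirth := by
    rw [← ENat.coe_toNat hnet]
    exact Nat.cast_le.mpr (Nat.le_of_eq hglen.symm)
  obtain ⟨c', hcard, hc'⟩ := StrongRainbowAux.rainbow_mod3 hG hw hemin hg6
  have hme : w.length ≤ G.edgeFinset.card := by
    have hnd := hw.isCircuit.isTrail.edges_nodup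
    have hsub : w.edges.toFinset ⊆ G.edgeFinset := by
      intro e he'
      rw [List.mem_toFinset] at he'
      rw [SimpleGraph.mem_edgeFinset]
      exact w.edges_subset_edgeSet he'
    have hcc := Finset.card_le_card hsub
    rwa [List.toFinset_card_of_nodup hnd, SimpleGraph.Walk.length_edges] at hcc
  have hpos3 : 0 < G.edgeFinset.card - 3 := by omega
  obtain ⟨c, hc⟩ := StrongRainbowAux.pack hpos3 c' hcard hc'
  have hle : G.src ≤ G.edgeFinset.card - 3 := Nat.sInf_le ⟨c, hc⟩
  omega
end

section
/- Let G be a unicyclic graph whose unique cycle C is a triangle with vertices v1, v2, v3, and let Ti be the tree containing vi in G − E(C). If all three trees T1, T2, T3 are nontrivial, then src(G) ≤ m − 3, where m is the number of edges of G. -/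
open SimpleGraph

/-- Splitting a geodesic walk at a support vertex yields two geodesic walks. -/
lemma aux_split {V : Type*} [DecidableEq V] {G : SimpleGraph V} (hG : G.Connected) {x y : V}
    (p : G.Walk x y) (hp : p.length = G.dist x y) {u : V} (hu : u ∈ p.support) :
    (p.takeUntil u hu).length = G.dist x u ∧ (p.dropUntil u hu).length = G.dist u y := by
  have h1 : G.dist x u ≤ (p.takeUntil u hu).length := SimpleGraph.dist_le _
  have h2 : G.dist u y ≤ (p.dropUntil u hu).length := SimpleGraph.dist_le _
  have h3 : (p.takeUntil u hu).length + (p.dropUntil u hu).length = p.length := by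
    rw [← SimpleGraph.Walk.length_append, SimpleGraph.Walk.take_spec]
  have h4 : G.dist x y ≤ G.dist x u + G.dist u y := hG.dist_triangle
  omega

lemma aux_B {V : Type*} [DecidableEq V] {G : SimpleGraph V} (hG : G.Connected) {a y vi vj : V}
    (r : G.Walk a y) (hr : r.length = G.dist a y) (he : s(vi, vj) ∈ r.edges)
    (hai : G.dist a vi = 1) (hji : vj ≠ vi) (hja : vj ≠ a) (hijd : G.dist vi vj = 1) :
    G.dist vi y = 1 + G.dist vj y := by
  have hvi : vi ∈ r.support := r.fst_mem_support_of_mem_edges he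
  obtain ⟨hs, ht⟩ := aux_split hG r hr hvi
  have hmem : s(vi, vj) ∈ (r.takeUntil vi hvi).edges ∨ s(vi, vj) ∈ (r.dropUntil vi hvi).edges := by
    have h0 : s(vi, vj) ∈ ((r.takeUntil vi hvi).append (r.dropUntil vi hvi)).edges := by
      rw [SimpleGraph.Walk.take_spec]; exact he
    rw [SimpleGraph.Walk.edges_append, List.mem_append] at h0
    exact h0
  have hnot : s(vi, vj) ∉ (r.takeUntil vi hvi).edges := by
    intro hin
    have hvjs : vj ∈ (r.takeUntil vi hvi).support :=
      (r.takeUntil vi hvi).snd_mem_support_of_mem_edges hin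
    obtain ⟨hs1, hs2⟩ := aux_split hG (r.takeUntil vi hvi) (by rw [hs, hai]) hvjs
    have d1 : 0 < G.dist a vj := hG.pos_dist_of_ne hja.symm
    have d2 : 0 < G.dist vj vi := hG.pos_dist_of_ne hji
    have h0 : ((r.takeUntil vi hvi).takeUntil vj hvjs).length +
        ((r.takeUntil vi hvi).dropUntil vj hvjs).length = (r.takeUntil vi hvi).length := by
      rw [← SimpleGraph.Walk.length_append, SimpleGraph.Walk.take_spec]
    omega
  have hmt : s(vi, vj) ∈ (r.dropUntil vi hvi).edges := hmem.resolve_left hnot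
  have hvjt : vj ∈ (r.dropUntil vi hvi).support :=
    (r.dropUntil vi hvi).snd_mem_support_of_mem_edges hmt
  obtain ⟨ht1, ht2⟩ := aux_split hG (r.dropUntil vi hvi) ht hvjt
  have hsum : ((r.dropUntil vi hvi).takeUntil vj hvjt).length +
      ((r.dropUntil vi hvi).dropUntil vj hvjt).length = (r.dropUntil vi hvi).length := by
    rw [← SimpleGraph.Walk.length_append, SimpleGraph.Walk.take_spec]
  omega

/-- A geodesic walk through `vk` cannot contain the edge `s(vi,vj)` of a triangle. -/
lemma aux_key {V : Type*} [DecidableEq V] {G : SimpleGraph V} (hG : G.Connected)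
    {x y vi vj vk : V} (p : G.Walk x y) (hp : p.length = G.dist x y)
    (hij : G.Adj vi vj) (hik : G.Adj vi vk) (hjk : G.Adj vj vk)
    (hks : vk ∈ p.support) (he : s(vi, vj) ∈ p.edges) : False := by
  have done1 : ∀ z : V, ∀ r : G.Walk vk z, r.length = G.dist vk z →
      s(vi, vj) ∈ r.edges → False := by
    intro z r hr her
    have dij : G.dist vi vj = 1 := by
      have hle : G.dist vi vj ≤ 1 := by simpa using SimpleGraph.dist_le hij.toWalk
      have hpos : 0 < G.dist vi vj := hG.pos_dist_of_ne hij.ne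
      omega
    have dji : G.dist vj vi = 1 := by rw [SimpleGraph.dist_comm]; exact dij
    have dai : G.dist vk vi = 1 := by
      have hle : G.dist vk vi ≤ 1 := by simpa using SimpleGraph.dist_le hik.symm.toWalk
      have hpos : 0 < G.dist vk vi := hG.pos_dist_of_ne hik.ne'
      omega
    have daj : G.dist vk vj = 1 := by
      have hle : G.dist vk vj ≤ 1 := by simpa using SimpleGraph.dist_le hjk.symm.toWalk
      have hpos : 0 < G.dist vk vj := hG.pos_dist_of_ne hjk.ne'
      omega
    have e1 : G.dist vi z = 1 + G.dist vj z :=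
      aux_B hG r hr her dai hij.ne.symm hjk.ne dij
    have e2 : G.dist vj z = 1 + G.dist vi z := by
      have her' : s(vj, vi) ∈ r.edges := by rwa [Sym2.eq_swap] at her
      exact aux_B hG r hr her' daj hij.ne hik.ne dji
    omega
  obtain ⟨hq, hr⟩ := aux_split hG p hp hks
  have hmem : s(vi, vj) ∈ (p.takeUntil vk hks).edges ∨ s(vi, vj) ∈ (p.dropUntil vk hks).edges := by
    have h0 : s(vi, vj) ∈ ((p.takeUntil vk hks).append (p.dropUntil vk hks)).edges := by
      rw [SimpleGraph.Walk.take_spec]; exact he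
    rw [SimpleGraph.Walk.edges_append, List.mem_append] at h0
    exact h0
  rcases hmem with hm | hm
  · have hrev : (p.takeUntil vk hks).reverse.length = G.dist vk x := by
      rw [SimpleGraph.Walk.length_reverse, hq, SimpleGraph.dist_comm]
    have hmr : s(vi, vj) ∈ (p.takeUntil vk hks).reverse.edges := by
      rw [SimpleGraph.Walk.edges_reverse, List.mem_reverse]; exact hm
    exact done1 x _ hrev hmr
  · exact done1 y _ hr hm

/-- Unicyclic graph whose cycle is a triangle `v1 v2 v3`: if all three pendant trees
`T1, T2, T3` are nontrivial, then `src G ≤ m - 3`. -/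
theorem stmt_12 {V : Type*} [Fintype V] [DecidableEq V] (G : SimpleGraph V)
    [DecidableRel G.Adj] (hG : G.Connected) (v1 v2 v3 : V)
    (h12 : G.Adj v1 v2) (h23 : G.Adj v2 v3) (h13 : G.Adj v1 v3)
    (huni : G.edgeFinset.card = Fintype.card V)
    (h1 : ∃ w, w ≠ v1 ∧ (G.deleteEdges {s(v1, v2), s(v2, v3), s(v1, v3)}).Reachable v1 w)
    (h2 : ∃ w, w ≠ v2 ∧ (G.deleteEdges {s(v1, v2), s(v2, v3), s(v1, v3)}).Reachable v2 w)
    (h3 : ∃ w, w ≠ v3 ∧ (G.deleteEdges {s(v1, v2), s(v2, v3), s(v1, v3)}).Reachable v3 w) :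
    G.src + 3 ≤ G.edgeFinset.card := by
  classical
  have getadj : ∀ v : V, (∃ w, w ≠ v ∧
      (G.deleteEdges {s(v1, v2), s(v2, v3), s(v1, v3)}).Reachable v w) →
      ∃ u, (G.deleteEdges {s(v1, v2), s(v2, v3), s(v1, v3)}).Adj v u := by
    intro v ⟨w, hw, hr⟩
    obtain ⟨q⟩ := hr
    cases q with
    | nil => exact absurd rfl hw.symm
    | cons h q => exact ⟨_, h⟩
  obtain ⟨u1, hu1⟩ := getadj v1 h1
  obtain ⟨u2, hu2⟩ := getadj v2 h2
  obtain ⟨u3, hu3⟩ := getadj v3 h3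
  rw [SimpleGraph.deleteEdges_adj] at hu1 hu2 hu3
  have n12 : v1 ≠ v2 := h12.ne
  have n23 : v2 ≠ v3 := h23.ne
  have n13 : v1 ≠ v3 := h13.ne
  set T : Finset (Sym2 V) := {s(v1, v2), s(v2, v3), s(v1, v3)} with hTdef
  have hmemT : ∀ e : Sym2 V,
      e ∈ ({s(v1, v2), s(v2, v3), s(v1, v3)} : Set (Sym2 V)) ↔ e ∈ T := by
    intro e; simp [hTdef]
  have hu1T : s(v1, u1) ∉ T := fun h => hu1.2 ((hmemT _).2 h)
  have hu2T : s(v2, u2) ∉ T := fun h => hu2.2 ((hmemT _).2 h)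
  have hu3T : s(v3, u3) ∉ T := fun h => hu3.2 ((hmemT _).2 h)
  set HE : Finset (Sym2 V) := G.edgeFinset \ T with hHEdef
  have hTsub : T ⊆ G.edgeFinset := by
    intro e heT
    rw [hTdef, Finset.mem_insert, Finset.mem_insert, Finset.mem_singleton] at heT
    rcases heT with rfl | rfl | rfl
    · exact SimpleGraph.mem_edgeFinset.2 h12
    · exact SimpleGraph.mem_edgeFinset.2 h23
    · exact SimpleGraph.mem_edgeFinset.2 h13
  have hT1 : s(v1, v2) ≠ s(v2, v3) := by
    intro h
    rcases Sym2.eq_iff.mp h with ⟨ha, hb⟩ | ⟨ha, hb⟩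
    · exact n12 ha
    · exact n13 ha
  have hT2 : s(v1, v2) ≠ s(v1, v3) := by
    intro h
    rcases Sym2.eq_iff.mp h with ⟨ha, hb⟩ | ⟨ha, hb⟩
    · exact n23 hb
    · exact n13 ha
  have hT3 : s(v2, v3) ≠ s(v1, v3) := by
    intro h
    rcases Sym2.eq_iff.mp h with ⟨ha, hb⟩ | ⟨ha, hb⟩
    · exact n12 ha.symm
    · exact n23 ha
  have hTcard : T.card = 3 := by
    rw [hTdef]
    rw [Finset.card_insert_of_notMem (by
      simp only [Finset.mem_insert, Finset.mem_singleton]; push_neg; exact ⟨hT1, hT2⟩),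
      Finset.card_insert_of_notMem (by
      simp only [Finset.mem_singleton]; exact hT3), Finset.card_singleton]
  have hHEcard : HE.card = G.edgeFinset.card - 3 := by
    rw [hHEdef, Finset.card_sdiff_of_subset hTsub, hTcard]
  have he1HE : s(v1, u1) ∈ HE := by
    rw [hHEdef, Finset.mem_sdiff]
    exact ⟨SimpleGraph.mem_edgeFinset.2 hu1.1, hu1T⟩
  have he2HE : s(v2, u2) ∈ HE := by
    rw [hHEdef, Finset.mem_sdiff]
    exact ⟨SimpleGraph.mem_edgeFinset.2 hu2.1, hu2T⟩
  have he3HE : s(v3, u3) ∈ HE := by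
    rw [hHEdef, Finset.mem_sdiff]
    exact ⟨SimpleGraph.mem_edgeFinset.2 hu3.1, hu3T⟩
  -- pairwise distinctness of the partner edges
  have hne12 : s(v1, u1) ≠ s(v2, u2) := by
    intro h
    rcases Sym2.eq_iff.mp h with ⟨ha, hb⟩ | ⟨ha, hb⟩
    · exact n12 ha
    · -- u1 = v2, so s(v1,u1) = s(v1,v2) ∈ T
      apply hu1T
      rw [hb, hTdef]
      simp
  have hne13 : s(v1, u1) ≠ s(v3, u3) := by
    intro h
    rcases Sym2.eq_iff.mp h with ⟨ha, hb⟩ | ⟨ha, hb⟩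
    · exact n13 ha
    · apply hu1T
      rw [hb, hTdef]
      simp
  have hne23 : s(v2, u2) ≠ s(v3, u3) := by
    intro h
    rcases Sym2.eq_iff.mp h with ⟨ha, hb⟩ | ⟨ha, hb⟩
    · exact n23 ha
    · apply hu2T
      rw [hb, hTdef]
      simp
  set N : ℕ := G.edgeFinset.card - 3 with hNdef
  have hcard3 : 3 ≤ G.edgeFinset.card := hTcard ▸ Finset.card_le_card hTsub
  have hcardHE : Fintype.card ↥HE = N := by rw [Fintype.card_coe, hHEcard]
  let ι : ↥HE → Fin N := fun e => Fin.cast hcardHE ((Fintype.equivFin ↥HE) e)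
  have hιinj : Function.Injective ι := by
    intro a b h
    have h' : ((Fintype.equivFin ↥HE) a : ℕ) = ((Fintype.equivFin ↥HE) b : ℕ) := by
      have h2 := congrArg Fin.val h
      simpa [ι] using h2
    exact (Fintype.equivFin ↥HE).injective (Fin.val_injective h')
  let c : Sym2 V → Fin N := fun e =>
    if e = s(v1, v2) then ι ⟨s(v3, u3), he3HE⟩
    else if e = s(v2, v3) then ι ⟨s(v1, u1), he1HE⟩
    else if e = s(v1, v3) then ι ⟨s(v2, u2), he2HE⟩
    else if h : e ∈ HE then ι ⟨e, h⟩ else ι ⟨s(v1, u1), he1HE⟩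
  have cHE : ∀ e (h : e ∈ HE), c e = ι ⟨e, h⟩ := by
    intro e h
    have hnT : e ∉ T := by rw [hHEdef, Finset.mem_sdiff] at h; exact h.2
    have hx1 : e ≠ s(v1, v2) := by
      intro hh; apply hnT; rw [hh, hTdef]; simp
    have hx2 : e ≠ s(v2, v3) := by
      intro hh; apply hnT; rw [hh, hTdef]; simp
    have hx3 : e ≠ s(v1, v3) := by
      intro hh; apply hnT; rw [hh, hTdef]; simp
    have h0 : c e = if e = s(v1, v2) then ι ⟨s(v3, u3), he3HE⟩
        else if e = s(v2, v3) then ι ⟨s(v1, u1), he1HE⟩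
        else if e = s(v1, v3) then ι ⟨s(v2, u2), he2HE⟩
        else if h : e ∈ HE then ι ⟨e, h⟩ else ι ⟨s(v1, u1), he1HE⟩ := rfl
    rw [h0, if_neg hx1, if_neg hx2, if_neg hx3, dif_pos h]
  have cfun : ∀ e : Sym2 V, c e = if e = s(v1, v2) then ι ⟨s(v3, u3), he3HE⟩
      else if e = s(v2, v3) then ι ⟨s(v1, u1), he1HE⟩
      else if e = s(v1, v3) then ι ⟨s(v2, u2), he2HE⟩
      else if h : e ∈ HE then ι ⟨e, h⟩ else ι ⟨s(v1, u1), he1HE⟩ := fun _ => rfl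
  have cT12 : c s(v1, v2) = ι ⟨s(v3, u3), he3HE⟩ := by
    rw [cfun, if_pos rfl]
  have cT23 : c s(v2, v3) = ι ⟨s(v1, u1), he1HE⟩ := by
    rw [cfun, if_neg hT1.symm, if_pos rfl]
  have cT13 : c s(v1, v3) = ι ⟨s(v2, u2), he2HE⟩ := by
    rw [cfun, if_neg hT2.symm, if_neg hT3.symm, if_pos rfl]
  have hv12 : ι ⟨s(v1, u1), he1HE⟩ ≠ ι ⟨s(v2, u2), he2HE⟩ := fun h =>
    hne12 (congrArg Subtype.val (hιinj h))
  have hv13 : ι ⟨s(v1, u1), he1HE⟩ ≠ ι ⟨s(v3, u3), he3HE⟩ := fun h =>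
    hne13 (congrArg Subtype.val (hιinj h))
  have hv23 : ι ⟨s(v2, u2), he2HE⟩ ≠ ι ⟨s(v3, u3), he3HE⟩ := fun h =>
    hne23 (congrArg Subtype.val (hιinj h))
  have hsrc : G.src ≤ N := by
    apply Nat.sInf_le
    refine ⟨c, fun u v => ?_⟩
    obtain ⟨p, hpath, hlen⟩ := hG.exists_path_of_dist u v
    refine ⟨p, hpath, hlen, ?_⟩
    apply List.Nodup.map_on _ hpath.edges_nodup
    intro e hemem f hfmem hcef
    have hclass : ∀ x ∈ p.edges, x ∈ T ∨ x ∈ HE := by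
      intro x hx
      have hxG : x ∈ G.edgeFinset := SimpleGraph.mem_edgeFinset.2 (p.edges_subset_edgeSet hx)
      by_cases hT : x ∈ T
      · exact Or.inl hT
      · exact Or.inr (by rw [hHEdef, Finset.mem_sdiff]; exact ⟨hxG, hT⟩)
    have keyfalse : ∀ (vi vj vk w : V), G.Adj vi vj → G.Adj vi vk → G.Adj vj vk →
        s(vi, vj) ∈ p.edges → s(vk, w) ∈ p.edges → False := by
      intro vi vj vk w hij hik hjk hij' hkw'
      exact aux_key hG p hlen hij hik hjk (p.fst_mem_support_of_mem_edges hkw') hij'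
    rcases hclass e hemem with heT | heHE
    · rw [hTdef, Finset.mem_insert, Finset.mem_insert, Finset.mem_singleton] at heT
      rcases hclass f hfmem with hfT | hfHE
      · rw [hTdef, Finset.mem_insert, Finset.mem_insert, Finset.mem_singleton] at hfT
        rcases heT with he' | he' | he' <;> rcases hfT with hf' | hf' | hf' <;>
          subst he' <;> subst hf'
        · rfl
        · rw [cT12, cT23] at hcef; exact absurd hcef hv13.symm
        · rw [cT12, cT13] at hcef; exact absurd hcef hv23.symm
        · rw [cT23, cT12] at hcef; exact absurd hcef hv13
        · rfl
        · rw [cT23, cT13] at hcef; exact absurd hcef hv12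
        · rw [cT13, cT12] at hcef; exact absurd hcef hv23
        · rw [cT13, cT23] at hcef; exact absurd hcef hv12.symm
        · rfl
      · exfalso
        rw [cHE f hfHE] at hcef
        rcases heT with he' | he' | he' <;> subst he'
        · rw [cT12] at hcef
          have hfe : f = s(v3, u3) := (congrArg Subtype.val (hιinj hcef)).symm
          rw [hfe] at hfmem
          exact keyfalse v1 v2 v3 u3 h12 h13 h23 hemem hfmem
        · rw [cT23] at hcef
          have hfe : f = s(v1, u1) := (congrArg Subtype.val (hιinj hcef)).symm
          rw [hfe] at hfmem
          exact keyfalse v2 v3 v1 u1 h23 h12.symm h13.symm hemem hfmem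
        · rw [cT13] at hcef
          have hfe : f = s(v2, u2) := (congrArg Subtype.val (hιinj hcef)).symm
          rw [hfe] at hfmem
          exact keyfalse v1 v3 v2 u2 h13 h12 h23.symm hemem hfmem
    · rcases hclass f hfmem with hfT | hfHE
      · exfalso
        rw [cHE e heHE] at hcef
        rw [hTdef, Finset.mem_insert, Finset.mem_insert, Finset.mem_singleton] at hfT
        rcases hfT with hf' | hf' | hf' <;> subst hf'
        · rw [cT12] at hcef
          have hee : e = s(v3, u3) := congrArg Subtype.val (hιinj hcef)
          rw [hee] at hemem
          exact keyfalse v1 v2 v3 u3 h12 h13 h23 hfmem hemem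
        · rw [cT23] at hcef
          have hee : e = s(v1, u1) := congrArg Subtype.val (hιinj hcef)
          rw [hee] at hemem
          exact keyfalse v2 v3 v1 u1 h23 h12.symm h13.symm hfmem hemem
        · rw [cT13] at hcef
          have hee : e = s(v2, u2) := congrArg Subtype.val (hιinj hcef)
          rw [hee] at hemem
          exact keyfalse v1 v3 v2 u2 h13 h12 h23.symm hfmem hemem
      · rw [cHE e heHE, cHE f hfHE] at hcef
        exact congrArg Subtype.val (hιinj hcef)
  omega
end

section
/- If G ∈ Ḡ_t (every block of G is a bridge or a triangle, G has exactly t triangles, and each triangle has a vertex of degree 2 in G), then in any strong rainbow coloring of G, the edges of any D2-tree T_G of G all receive pairwise distinct colors; consequently src(G) ≥ m − 2t. -/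
open SimpleGraph

/-- The graph obtained from `G` by deleting all edges incident to `W`. -/
private def tgraph {V : Type*} (G : SimpleGraph V) (W : Finset V) : SimpleGraph V where
  Adj a b := G.Adj a b ∧ a ∉ W ∧ b ∉ W
  symm := ⟨fun a b ⟨h, ha, hb⟩ => ⟨h.symm, hb, ha⟩⟩
  loopless := ⟨fun a ⟨h, _, _⟩ => G.loopless.irrefl a h⟩

private lemma tgraph_le {V : Type*} (G : SimpleGraph V) (W : Finset V) : tgraph G W ≤ G :=
  fun _ _ h => h.1

section aux

variable {V : Type*} [Fintype V] [DecidableEq V] (G : SimpleGraph V) [DecidableRel G.Adj]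
  (W : Finset V)

/-- The two neighbours of a degree-2 triangle vertex. -/
private lemma nbr_lemma (w : V) (hdeg : G.degree w = 2)
    (htri : ∃ a b : V, G.Adj w a ∧ G.Adj w b ∧ G.Adj a b) :
    ∃ a b : V, G.Adj a b ∧ ∀ x : V, G.Adj w x → x = a ∨ x = b := by
  obtain ⟨a, b, ha, hb, hab⟩ := htri
  have hsub : ({a, b} : Finset V) ⊆ G.neighborFinset w := by
    intro x hx
    simp only [Finset.mem_insert, Finset.mem_singleton] at hx
    rcases hx with rfl | rfl <;> simp [SimpleGraph.mem_neighborFinset, ha, hb]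
  have hcard : ({a, b} : Finset V).card = 2 := by
    rw [Finset.card_insert_of_notMem (by simp [hab.ne]), Finset.card_singleton]
  have heq : G.neighborFinset w = {a, b} := by
    refine (Finset.eq_of_subset_of_card_le hsub ?_).symm
    rw [hcard, G.card_neighborFinset_eq_degree, hdeg]
  refine ⟨a, b, hab, fun x hx => ?_⟩
  have : x ∈ G.neighborFinset w := by simp [SimpleGraph.mem_neighborFinset, hx]
  rw [heq] at this
  simpa using this

end aux

section aux2

variable {V : Type*} [Fintype V] [DecidableEq V] {G : SimpleGraph V} [DecidableRel G.Adj]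
  {W : Finset V}

/-- A geodesic between vertices outside `W` avoids `W` entirely. -/
private lemma geodesic_avoids
    (hWdeg : ∀ w ∈ W, G.degree w = 2)
    (hWtri : ∀ w ∈ W, ∃ a b : V, G.Adj w a ∧ G.Adj w b ∧ G.Adj a b)
    {p q : V} (R : G.Walk p q) (hR : R.IsPath) (hlen : R.length = G.dist p q)
    (hp : p ∉ W) (hq : q ∉ W) : ∀ z ∈ R.support, z ∉ W := by
  intro w hw hwW
  have hwp : w ≠ p := fun h => hp (h ▸ hwW)
  have hwq : w ≠ q := fun h => hq (h ▸ hwW)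
  set T := R.takeUntil w hw with hT
  set D := R.dropUntil w hw with hD
  have hspec : T.append D = R := R.take_spec hw
  -- D is not nil
  obtain ⟨b', hb, D', hD'⟩ := SimpleGraph.Walk.not_nil_iff.mp
    (SimpleGraph.Walk.not_nil_of_ne hwq : ¬ D.Nil)
  obtain ⟨a', ha, T'r, hT'⟩ := SimpleGraph.Walk.not_nil_iff.mp
    (SimpleGraph.Walk.not_nil_of_ne hwp : ¬ T.reverse.Nil)
  -- a' and b' are distinct
  have hsuppnd : (T.support ++ D.support.tail).Nodup := by
    rw [← SimpleGraph.Walk.support_append, hspec]; exact hR.support_nodup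
  have ha'T : a' ∈ T.support := by
    have : a' ∈ T.reverse.support := by
      rw [hT']; simp [SimpleGraph.Walk.support_cons]
    rwa [SimpleGraph.Walk.support_reverse, List.mem_reverse] at this
  have hb'D : b' ∈ D.support.tail := by
    rw [hD']; simp [SimpleGraph.Walk.support_cons]
  have hab' : a' ≠ b' := by
    intro h
    exact (List.disjoint_of_nodup_append hsuppnd) ha'T (h ▸ hb'D)
  -- a' and b' are adjacent
  obtain ⟨a, b, hab, hnb⟩ := nbr_lemma G w (hWdeg w hwW) (hWtri w hwW)
  have hadj : G.Adj a' b' := by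
    rcases hnb a' ha with rfl | rfl <;> rcases hnb b' hb with rfl | rfl
    · exact absurd rfl hab'
    · exact hab
    · exact hab.symm
    · exact absurd rfl hab'
  -- build a shorter walk
  have hTrev : T = (SimpleGraph.Walk.cons ha T'r).reverse := by
    rw [← hT', SimpleGraph.Walk.reverse_reverse]
  set N : G.Walk p q := (T'r.reverse.append (SimpleGraph.Walk.cons hadj D')) with hN
  have hlenN : N.length + 1 = R.length := by
    have h1 : T.length = T'r.length + 1 := by
      rw [hTrev, SimpleGraph.Walk.length_reverse, SimpleGraph.Walk.length_cons]
    have h2 : D.length = D'.length + 1 := by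
      rw [hD', SimpleGraph.Walk.length_cons]
    have h3 : R.length = T.length + D.length := by
      rw [← hspec, SimpleGraph.Walk.length_append]
    rw [hN, SimpleGraph.Walk.length_append, SimpleGraph.Walk.length_reverse,
      SimpleGraph.Walk.length_cons]
    omega
  have := G.dist_le N
  omega

end aux2

section aux3

variable {V : Type*} [Fintype V] [DecidableEq V] {G : SimpleGraph V} [DecidableRel G.Adj]
  {W : Finset V}

private lemma tgraph_acyclic
    (hblocks : ∀ (a : V) (w : G.Walk a a), w.IsCycle → w.length = 3)
    (hWsel : ∀ a b c : V, G.Adj a b → G.Adj b c → G.Adj a c →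
      ∃! x : V, x ∈ ({a, b, c} : Finset V) ∧ x ∈ W) :
    (tgraph G W).IsAcyclic := by
  intro v c hc
  have hsub : ∀ e ∈ c.edges, e ∈ G.edgeSet := fun e he =>
    (SimpleGraph.edgeSet_mono (tgraph_le G W)) (c.edges_subset_edgeSet he)
  have h3 : c.length = 3 := by
    have := hblocks v (c.transfer G hsub) (hc.transfer hsub)
    rwa [SimpleGraph.Walk.length_transfer] at this
  clear hc hsub
  cases c with
  | nil => simp at h3
  | cons h1 c1 =>
    cases c1 with
    | nil => simp at h3
    | cons h2 c2 =>
      cases c2 with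
      | nil => simp at h3
      | cons h3' c3 =>
        cases c3 with
        | cons h4 c4 => simp [SimpleGraph.Walk.length_cons] at h3
        | nil =>
          obtain ⟨x, ⟨hxm, hxW⟩, huniq⟩ := hWsel v _ _ h1.1 h2.1 h3'.1.symm
          simp only [Finset.mem_insert, Finset.mem_singleton] at hxm
          rcases hxm with rfl | rfl | rfl
          · exact h1.2.1 hxW
          · exact h1.2.2 hxW
          · exact h2.2.2 hxW

private lemma cons_isPath_of_acyclic (hac : (tgraph G W).IsAcyclic) {u v x : V}
    (h : (tgraph G W).Adj u v) (P : (tgraph G W).Walk v x) (hP : P.IsPath)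
    (he : s(u, v) ∉ P.edges) : (SimpleGraph.Walk.cons h P).IsPath := by
  rw [SimpleGraph.Walk.cons_isPath_iff]
  refine ⟨hP, fun hu => ?_⟩
  set T := P.takeUntil u hu with hT
  have hTe : s(u, v) ∉ T.edges := fun h' => he (P.edges_takeUntil_subset hu h')
  refine hac (SimpleGraph.Walk.cons h T) ⟨⟨?_, by simp⟩, ?_⟩
  · -- IsTrail
    refine ⟨?_⟩
    rw [SimpleGraph.Walk.edges_cons]
    exact List.nodup_cons.mpr ⟨hTe, (hP.takeUntil hu).isTrail.edges_nodup⟩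
  · -- support.tail nodup
    rw [SimpleGraph.Walk.support_cons]
    exact (hP.takeUntil hu).support_nodup

end aux3

section aux4

variable {V : Type*} [Fintype V] [DecidableEq V] {G : SimpleGraph V} [DecidableRel G.Adj]
  {W : Finset V}

private lemma walk_to_tgraph {p q : V} (R : G.Walk p q)
    (hsupp : ∀ z ∈ R.support, z ∉ W) : ∀ e ∈ R.edges, e ∈ (tgraph G W).edgeSet := by
  intro e he
  revert he
  induction e using Sym2.ind with
  | _ a b =>
    intro he
    rw [SimpleGraph.mem_edgeSet]
    exact ⟨R.adj_of_mem_edges he, hsupp a (R.fst_mem_support_of_mem_edges he),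
      hsupp b (R.snd_mem_support_of_mem_edges he)⟩

private lemma key_lemma
    (hblocks : ∀ (a : V) (w : G.Walk a a), w.IsCycle → w.length = 3)
    (hWdeg : ∀ w ∈ W, G.degree w = 2)
    (hWtri : ∀ w ∈ W, ∃ a b : V, G.Adj w a ∧ G.Adj w b ∧ G.Adj a b)
    (hWsel : ∀ a b c : V, G.Adj a b → G.Adj b c → G.Adj a c →
      ∃! x : V, x ∈ ({a, b, c} : Finset V) ∧ x ∈ W)
    (c : Sym2 V → ℕ) (hc : G.IsStrongRainbowColoring c)
    (u v x y : V) (huv : G.Adj u v) (hxy : G.Adj x y)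
    (hu : u ∉ W) (hv : v ∉ W) (hx : x ∉ W) (hy : y ∉ W)
    (hne : s(u, v) ≠ s(x, y)) : c s(u, v) ≠ c s(x, y) := by
  intro hceq
  have hac := tgraph_acyclic hblocks hWsel
  -- canonical geodesic transfer
  have hgeo : ∀ p q : V, p ∉ W → q ∉ W →
      ∃ P : (tgraph G W).Walk p q, P.IsPath ∧
        ∃ R : G.Walk p q, R.IsPath ∧ R.length = G.dist p q ∧ (R.edges.map c).Nodup ∧
          R.edges = P.edges := by
    intro p q hp hq
    obtain ⟨R, hRp, hRl, hRn⟩ := hc p q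
    have havoid := geodesic_avoids hWdeg hWtri R hRp hRl hp hq
    have hsub := walk_to_tgraph R havoid
    exact ⟨R.transfer _ hsub, hRp.transfer hsub, R, hRp, hRl, hRn,
      (R.edges_transfer hsub).symm⟩
  -- step 1 : a path from some endpoint of e1 to x containing e1
  have huv' : (tgraph G W).Adj u v := ⟨huv, hu, hv⟩
  have hyx' : (tgraph G W).Adj y x := ⟨hxy.symm, hy, hx⟩
  obtain ⟨P0, hP0, -⟩ := hgeo v x hv hx
  obtain ⟨p, hp, P1, hP1, hP1e⟩ :
      ∃ p, p ∉ W ∧ ∃ P1 : (tgraph G W).Walk p x, P1.IsPath ∧ s(u, v) ∈ P1.edges := by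
    by_cases h1 : s(u, v) ∈ P0.edges
    · exact ⟨v, hv, P0, hP0, h1⟩
    · exact ⟨u, hu, SimpleGraph.Walk.cons huv' P0,
        cons_isPath_of_acyclic hac huv' P0 hP0 h1, by simp⟩
  -- step 2 : extend to contain e2
  obtain ⟨q, hq, P2, hP2, hP2e1, hP2e2⟩ :
      ∃ q, q ∉ W ∧ ∃ P2 : (tgraph G W).Walk p q, P2.IsPath ∧
        s(u, v) ∈ P2.edges ∧ s(x, y) ∈ P2.edges := by
    by_cases h2 : s(x, y) ∈ P1.edges
    · exact ⟨x, hx, P1, hP1, hP1e, h2⟩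
    · have hrev : s(y, x) ∉ P1.reverse.edges := by
        rw [SimpleGraph.Walk.edges_reverse, List.mem_reverse, Sym2.eq_swap]
        exact h2
      have hpath := cons_isPath_of_acyclic hac hyx' P1.reverse hP1.reverse hrev
      refine ⟨y, hy, (SimpleGraph.Walk.cons hyx' P1.reverse).reverse, hpath.reverse, ?_, ?_⟩
      · rw [SimpleGraph.Walk.edges_reverse, List.mem_reverse, SimpleGraph.Walk.edges_cons,
          SimpleGraph.Walk.edges_reverse]
        simp [hP1e]
      · rw [SimpleGraph.Walk.edges_reverse, List.mem_reverse, SimpleGraph.Walk.edges_cons]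
        simp [Sym2.eq_swap]
  -- step 3 : the geodesic from p to q equals P2
  obtain ⟨P3, hP3, R, hRp, hRl, hRn, hRe⟩ := hgeo p q hp hq
  have hedges : P3 = P2 :=
    congrArg Subtype.val (hac.path_unique (⟨P3, hP3⟩ : (tgraph G W).Path p q) ⟨P2, hP2⟩)
  have h1 : s(u, v) ∈ R.edges := by rw [hRe, hedges]; exact hP2e1
  have h2 : s(x, y) ∈ R.edges := by rw [hRe, hedges]; exact hP2e2
  exact hne (List.inj_on_of_nodup_map hRn h1 h2 hceq)

end aux4

section final

variable {V : Type*} [Fintype V] [DecidableEq V] {G : SimpleGraph V} [DecidableRel G.Adj]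
  {W : Finset V}

private lemma W_card_le (t : ℕ)
    (hcount : {S : Finset (Sym2 V) | ∃ a b c : V, G.Adj a b ∧ G.Adj b c ∧ G.Adj a c ∧
      S = {s(a, b), s(b, c), s(a, c)}}.ncard = t)
    (hWtri : ∀ w ∈ W, ∃ a b : V, G.Adj w a ∧ G.Adj w b ∧ G.Adj a b)
    (hWsel : ∀ a b c : V, G.Adj a b → G.Adj b c → G.Adj a c →
      ∃! x : V, x ∈ ({a, b, c} : Finset V) ∧ x ∈ W) :
    W.card ≤ t := by
  classical
  set T : Set (Finset (Sym2 V)) := {S : Finset (Sym2 V) | ∃ a b c : V,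
    G.Adj a b ∧ G.Adj b c ∧ G.Adj a c ∧ S = {s(a, b), s(b, c), s(a, c)}} with hTdef
  have hfin : T.Finite := Set.toFinite T
  have hcard : hfin.toFinset.card = t := by
    rw [← Set.ncard_eq_toFinset_card _ hfin, hcount]
  choose! A B hA hB hAB using hWtri
  set f : V → Finset (Sym2 V) := fun w => {s(w, A w), s(A w, B w), s(w, B w)} with hf
  have hmaps : ∀ w ∈ W, f w ∈ hfin.toFinset := by
    intro w hw
    rw [Set.Finite.mem_toFinset]
    exact ⟨w, A w, B w, hA w hw, hAB w hw, hB w hw, rfl⟩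
  have hinj : ∀ w₁ ∈ W, ∀ w₂ ∈ W, f w₁ = f w₂ → w₁ = w₂ := by
    intro w₁ h₁ w₂ h₂ heq
    by_contra hne
    -- w₂ is an endpoint of an edge of f w₂ = f w₁
    have hmem : s(w₂, A w₂) ∈ f w₁ := by rw [heq]; simp [hf]
    have hw2mem : w₂ = w₁ ∨ w₂ = A w₁ ∨ w₂ = B w₁ := by
      simp only [hf, Finset.mem_insert, Finset.mem_singleton, Sym2.eq_iff] at hmem
      tauto
    obtain ⟨z, -, huniq⟩ := hWsel w₁ (A w₁) (B w₁) (hA w₁ h₁) (hAB w₁ h₁) (hB w₁ h₁)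
    have e1 : w₁ = z := (huniq w₁ ⟨by simp, h₁⟩).symm ▸ rfl
    have e2 : w₂ = z := by
      refine (huniq w₂ ⟨?_, h₂⟩)
      rcases hw2mem with rfl | rfl | rfl <;> simp
    exact hne (e1.trans e2.symm)
  calc W.card ≤ hfin.toFinset.card := Finset.card_le_card_of_injOn f hmaps hinj
    _ = t := hcard

end final


/-- Suppose `G ∈ Ḡ_t`: `G` is connected, every cycle of `G` is a triangle (so every block
is a bridge or a triangle), `G` has exactly `t` triangles, and each triangle has a vertex
of degree 2 in `G`.  Let `W` pick exactly one degree-2 vertex from each triangle, so that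
the graph obtained by deleting `W` is a `D2`-tree `T_G` of `G`.  Then under any strong
rainbow coloring, the edges of `T_G` (the edges of `G` avoiding `W`) receive pairwise
distinct colors; consequently `src G ≥ m - 2t`. -/
theorem stmt_16 {V : Type*} [Fintype V] [DecidableEq V] (G : SimpleGraph V)
    [DecidableRel G.Adj] (hG : G.Connected) (t : ℕ)
    (hblocks : ∀ (a : V) (w : G.Walk a a), w.IsCycle → w.length = 3)
    (hcount : {S : Finset (Sym2 V) | ∃ a b c : V, G.Adj a b ∧ G.Adj b c ∧ G.Adj a c ∧
      S = {s(a, b), s(b, c), s(a, c)}}.ncard = t)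
    (hdeg2 : ∀ a b c : V, G.Adj a b → G.Adj b c → G.Adj a c →
      G.degree a = 2 ∨ G.degree b = 2 ∨ G.degree c = 2)
    (W : Finset V)
    (hWdeg : ∀ w ∈ W, G.degree w = 2)
    (hWtri : ∀ w ∈ W, ∃ a b : V, G.Adj w a ∧ G.Adj w b ∧ G.Adj a b)
    (hWsel : ∀ a b c : V, G.Adj a b → G.Adj b c → G.Adj a c →
      ∃! x : V, x ∈ ({a, b, c} : Finset V) ∧ x ∈ W) :
    (∀ c : Sym2 V → ℕ, G.IsStrongRainbowColoring c →
      ∀ e1 ∈ G.edgeSet, ∀ e2 ∈ G.edgeSet, (∀ x ∈ e1, x ∉ W) → (∀ x ∈ e2, x ∉ W) →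
        e1 ≠ e2 → c e1 ≠ c e2) ∧
    G.edgeFinset.card - 2 * t ≤ G.src := by
  classical
  have part1 : ∀ c : Sym2 V → ℕ, G.IsStrongRainbowColoring c →
      ∀ e1 ∈ G.edgeSet, ∀ e2 ∈ G.edgeSet, (∀ x ∈ e1, x ∉ W) → (∀ x ∈ e2, x ∉ W) →
        e1 ≠ e2 → c e1 ≠ c e2 := by
    intro c hc e1 he1 e2 he2 hW1 hW2 hne
    obtain ⟨u, v, rfl⟩ : ∃ u v, e1 = s(u, v) :=
      Sym2.ind (fun a b => ⟨a, b, rfl⟩) e1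
    obtain ⟨x, y, rfl⟩ : ∃ u v, e2 = s(u, v) :=
      Sym2.ind (fun a b => ⟨a, b, rfl⟩) e2
    exact key_lemma hblocks hWdeg hWtri hWsel c hc u v x y
      ((SimpleGraph.mem_edgeSet G).mp he1) ((SimpleGraph.mem_edgeSet G).mp he2)
      (hW1 u (by simp)) (hW1 v (by simp)) (hW2 x (by simp)) (hW2 y (by simp)) hne
  refine ⟨part1, ?_⟩
  have hSne : {n : ℕ | ∃ c : Sym2 V → Fin n, ∀ u v : V, ∃ p : G.Walk u v,
      p.IsPath ∧ p.length = G.dist u v ∧ (p.edges.map c).Nodup}.Nonempty := by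
    refine ⟨Fintype.card (Sym2 V), Fintype.equivFin (Sym2 V), fun u v => ?_⟩
    obtain ⟨p, hp, hl⟩ := hG.exists_path_of_dist u v
    exact ⟨p, hp, hl, (hp.isTrail.edges_nodup).map (Equiv.injective _)⟩
  have hmem : G.src ∈ {n : ℕ | ∃ c : Sym2 V → Fin n, ∀ u v : V, ∃ p : G.Walk u v,
      p.IsPath ∧ p.length = G.dist u v ∧ (p.edges.map c).Nodup} := Nat.sInf_mem hSne
  obtain ⟨c0, hc0⟩ := hmem
  have hsrc : G.IsStrongRainbowColoring (fun e => (c0 e : ℕ)) := by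
    intro u v
    obtain ⟨p, hp, hl, hn⟩ := hc0 u v
    refine ⟨p, hp, hl, ?_⟩
    have heq : p.edges.map (fun e => (c0 e : ℕ)) = (p.edges.map c0).map Fin.val := by
      rw [List.map_map]; rfl
    rw [heq]
    exact hn.map Fin.val_injective
  have hinj := part1 _ hsrc
  set F := G.edgeFinset.filter (fun e => ∀ x ∈ e, x ∉ W) with hF
  have hFle : F.card ≤ G.src := by
    have hmaps : ∀ e ∈ F, c0 e ∈ (Finset.univ : Finset (Fin G.src)) :=
      fun e _ => Finset.mem_univ _
    have hinjOn : ∀ e1 ∈ F, ∀ e2 ∈ F, c0 e1 = c0 e2 → e1 = e2 := by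
      intro e1 h1 e2 h2 hcc
      by_contra hne
      have he1 := Finset.mem_filter.mp h1
      have he2 := Finset.mem_filter.mp h2
      exact hinj _ (SimpleGraph.mem_edgeFinset.mp he1.1) _
        (SimpleGraph.mem_edgeFinset.mp he2.1) he1.2 he2.2 hne (congrArg Fin.val hcc)
    have := Finset.card_le_card_of_injOn (fun e => c0 e) hmaps hinjOn
    simpa using this
  set EW := G.edgeFinset.filter (fun e => ¬ ∀ x ∈ e, x ∉ W) with hEW
  have hsplit : F.card + EW.card = G.edgeFinset.card :=
    Finset.card_filter_add_card_filter_not _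
  have hEWle : EW.card ≤ 2 * W.card := by
    have hsub : EW ⊆ W.biUnion (fun w => G.incidenceFinset w) := by
      intro e he
      obtain ⟨heE, hex⟩ := Finset.mem_filter.mp he
      push_neg at hex
      obtain ⟨z, hz, hzW⟩ := hex
      refine Finset.mem_biUnion.mpr ⟨z, hzW, ?_⟩
      rw [SimpleGraph.mem_incidenceFinset]
      exact ⟨SimpleGraph.mem_edgeFinset.mp heE, hz⟩
    calc EW.card ≤ (W.biUnion (fun w => G.incidenceFinset w)).card :=
          Finset.card_le_card hsub
      _ ≤ ∑ w ∈ W, (G.incidenceFinset w).card := Finset.card_biUnion_le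
      _ = ∑ w ∈ W, 2 := Finset.sum_congr rfl (fun w hw => by
          rw [SimpleGraph.card_incidenceFinset_eq_degree, hWdeg w hw])
      _ = 2 * W.card := by rw [Finset.sum_const, smul_eq_mul, mul_comm]
  have hWt := W_card_le t hcount hWtri hWsel
  omega
end

section
/- Let G be a connected cubic graph on n vertices and L(G) its line graph. Then src(L(G)) ≤ n. -/
open SimpleGraph

section Aux

variable {V : Type*} {G : SimpleGraph V}

lemma aux_neV (s : Sym2 G.edgeSet) : Nonempty V := by
  induction s using Sym2.ind with
  | _ x y =>
    obtain ⟨e, _⟩ := x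
    induction e using Sym2.ind with
    | _ a b => exact ⟨a⟩

open Classical in
noncomputable def commonV (G : SimpleGraph V) (s : Sym2 G.edgeSet) : V :=
  if h : ∃ v : V, ∀ e ∈ s, v ∈ (e : Sym2 V) then h.choose
  else Classical.choice (aux_neV s)

lemma commonV_spec {e f : G.edgeSet} (h : ∃ v : V, v ∈ (e : Sym2 V) ∧ v ∈ (f : Sym2 V)) :
    commonV G s(e, f) ∈ (e : Sym2 V) ∧ commonV G s(e, f) ∈ (f : Sym2 V) := by
  obtain ⟨v, hv1, hv2⟩ := h
  have h' : ∃ v : V, ∀ e' ∈ s(e, f), v ∈ (e' : Sym2 V) := by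
    refine ⟨v, fun e' he' => ?_⟩
    rcases Sym2.mem_iff.mp he' with rfl | rfl <;> assumption
  rw [commonV, dif_pos h']
  exact ⟨h'.choose_spec e (Sym2.mem_mk_left e f), h'.choose_spec f (Sym2.mem_mk_right e f)⟩

lemma adj_of_common {e f : G.edgeSet} (hne : e ≠ f) {v : V}
    (h1 : v ∈ (e : Sym2 V)) (h2 : v ∈ (f : Sym2 V)) : (G.lineGraph).Adj e f :=
  lineGraph_adj_iff_exists.mpr ⟨hne, v, h1, h2⟩

lemma lineGraph_reachable {a c : V} (w : G.Walk a c) :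
    ∀ (e f : G.edgeSet), a ∈ (e : Sym2 V) → c ∈ (f : Sym2 V) →
    (G.lineGraph).Reachable e f := by
  induction w with
  | nil =>
    intro e f ha hc
    rcases eq_or_ne e f with rfl | hne
    · exact Reachable.refl _
    · exact (adj_of_common hne ha hc).reachable
  | @cons a b c' hab w ih =>
    intro e f ha hc
    set g : G.edgeSet := ⟨s(a, b), hab⟩ with hg
    have hb : b ∈ (g : Sym2 V) := Sym2.mem_mk_right a b
    have hag : a ∈ (g : Sym2 V) := Sym2.mem_mk_left a b
    have h1 : (G.lineGraph).Reachable e g := by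
      rcases eq_or_ne e g with rfl | hne
      · exact Reachable.refl _
      · exact (adj_of_common hne ha hag).reachable
    exact h1.trans (ih g f hb hc)

/-- The key rainbow lemma: geodesics get distinct `commonV` colors. -/
lemma geodesic_rainbow [Fintype V] [DecidableEq V]
    [DecidableRel G.Adj] (hcubic : ∀ v : V, G.degree v = 3)
    {e f : G.edgeSet} (p : (G.lineGraph).Walk e f) (hp : p.IsPath)
    (hmin : ∀ q : (G.lineGraph).Walk e f, p.length ≤ q.length) :
    (p.edges.map (commonV G)).Nodup := by
  induction p with
  | nil => simp
  | @cons e e' f h t ih =>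
    rw [Walk.cons_isPath_iff] at hp
    obtain ⟨ht, hes⟩ := hp
    have htmin : ∀ q : (G.lineGraph).Walk e' f, t.length ≤ q.length := by
      intro q
      have := hmin (Walk.cons h q)
      simpa using this
    simp only [Walk.edges_cons, List.map_cons, List.nodup_cons]
    refine ⟨?_, ih ht htmin⟩
    intro hmem
    rw [List.mem_map] at hmem
    obtain ⟨d, hd, hcol⟩ := hmem
    induction d using Sym2.ind with
    | _ x y =>
      have hadj : (G.lineGraph).Adj x y := t.adj_of_mem_edges hd
      have hxy : x ≠ y := hadj.ne
      set v := commonV G s(e, e') with hv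
      have hsp1 : v ∈ (e : Sym2 V) ∧ v ∈ (e' : Sym2 V) := by
        obtain ⟨_, w, hw⟩ := lineGraph_adj_iff_exists.mp h
        exact commonV_spec ⟨w, hw⟩
      have hsp2 : v ∈ (x : Sym2 V) ∧ v ∈ (y : Sym2 V) := by
        obtain ⟨_, w, hw⟩ := lineGraph_adj_iff_exists.mp hadj
        have h2 := commonV_spec (e := x) (f := y) ⟨w, hw⟩
        rwa [hcol] at h2
      have hxs : x ∈ t.support := t.fst_mem_support_of_mem_edges hd
      have hys : y ∈ t.support := t.snd_mem_support_of_mem_edges hd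
      have hex : e ≠ x := fun h' => hes (h' ▸ hxs)
      have hey : e ≠ y := fun h' => hes (h' ▸ hys)
      have hee' : e ≠ e' := h.ne
      -- all four edges lie in the incidence finset of v, which has card 3
      have hinc : ∀ z : G.edgeSet, v ∈ (z : Sym2 V) → (z : Sym2 V) ∈ G.incidenceFinset v := by
        intro z hz
        rw [mem_incidenceFinset]
        exact G.edge_mem_incidenceSet_iff.mpr hz
      have hpig : e' = x ∨ e' = y := by
        by_contra hcon
        push_neg at hcon
        obtain ⟨h1, h2⟩ := hcon
        have hsub : ({(e : Sym2 V), (e' : Sym2 V), (x : Sym2 V), (y : Sym2 V)} : Finset (Sym2 V))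
            ⊆ G.incidenceFinset v := by
          intro z hz
          simp only [Finset.mem_insert, Finset.mem_singleton] at hz
          rcases hz with rfl | rfl | rfl | rfl
          exacts [hinc e hsp1.1, hinc e' hsp1.2, hinc x hsp2.1, hinc y hsp2.2]
        have hcard : ({(e : Sym2 V), (e' : Sym2 V), (x : Sym2 V), (y : Sym2 V)} :
            Finset (Sym2 V)).card = 4 := by
          have i1 : (e : Sym2 V) ≠ e' := fun hh => hee' (Subtype.ext hh)
          have i2 : (e : Sym2 V) ≠ x := fun hh => hex (Subtype.ext hh)
          have i3 : (e : Sym2 V) ≠ y := fun hh => hey (Subtype.ext hh)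
          have i4 : (e' : Sym2 V) ≠ x := fun hh => h1 (Subtype.ext hh)
          have i5 : (e' : Sym2 V) ≠ y := fun hh => h2 (Subtype.ext hh)
          have i6 : (x : Sym2 V) ≠ y := fun hh => hxy (Subtype.ext hh)
          simp [Finset.card_insert_of_notMem, i1, i2, i3, i4, i5, i6]
        have := Finset.card_le_card hsub
        rw [hcard, card_incidenceFinset_eq_degree, hcubic] at this
        omega
      -- WLOG-free shortcut construction
      have shortcut : ∀ z : G.edgeSet, z ∈ t.support → z ≠ e' → (G.lineGraph).Adj e z → False := by
        intro z hzs hze' hadjz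
        have htake := t.take_spec hzs
        have hlen : (t.takeUntil z hzs).length + (t.dropUntil z hzs).length = t.length := by
          rw [← Walk.length_append, htake]
        have hpos : 1 ≤ (t.takeUntil z hzs).length := by
          rcases Nat.eq_zero_or_pos (t.takeUntil z hzs).length with h0 | h0
          · exact absurd (Walk.eq_of_length_eq_zero h0).symm hze'
          · exact h0
        have := hmin (Walk.cons hadjz (t.dropUntil z hzs))
        simp only [Walk.length_cons] at this
        omega
      rcases hpig with rfl | rfl
      · -- e' = x ; then y ≠ e', y in support, e adj y
        have hye' : y ≠ e' := fun hh => hxy hh.symm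
        exact shortcut y hys hye' (adj_of_common hey hsp1.1 hsp2.2)
      · -- e' = y
        have hxe' : x ≠ e' := hxy
        exact shortcut x hxs hxe' (adj_of_common hex hsp1.1 hsp2.1)

end Aux

/-- For a connected cubic graph `G` on `n` vertices, `src (L(G)) ≤ n`. -/
theorem stmt_17 {V : Type*} [Fintype V] [DecidableEq V] (G : SimpleGraph V)
    [DecidableRel G.Adj] (hG : G.Connected) (hcubic : ∀ v : V, G.degree v = 3) :
    (G.lineGraph).src ≤ Fintype.card V := by
  apply Nat.sInf_le
  refine ⟨fun s => Fintype.equivFin V (commonV G s), fun u v => ?_⟩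
  have hreach : (G.lineGraph).Reachable u v := by
    have ha := (u : Sym2 V).out_fst_mem
    have hc := (v : Sym2 V).out_fst_mem
    obtain ⟨w⟩ := hG.preconnected (u : Sym2 V).out.1 (v : Sym2 V).out.1
    exact lineGraph_reachable w u v ha hc
  obtain ⟨p, hp, hlen⟩ := hreach.exists_path_of_dist
  refine ⟨p, hp, hlen, ?_⟩
  have hmin : ∀ q : (G.lineGraph).Walk u v, p.length ≤ q.length := by
    intro q; rw [hlen]; exact dist_le q
  have hnd := geodesic_rainbow hcubic p hp hmin
  have : p.edges.map (fun s => Fintype.equivFin V (commonV G s))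
      = (p.edges.map (commonV G)).map (Fintype.equivFin V) := by
    rw [List.map_map]; rfl
  rw [this]
  exact hnd.map (Fintype.equivFin V).injective
end
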